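/- arXiv:2302.06606 — 5 statements merged into one kernel-verified Lean document; each statement's English description precedes it below -/
import Mathlib

section
/- Let MG be an m-player finite Markov game, let π = {π_h(·|s)}_{(s,h)} be a Markov joint policy, fix a player i ∈ [m], and suppose we are given functions \bar V_{i,h}: S → ℝ for h ∈ [H+1] with \bar V_{i,H+1} ≡ 0, and bonus functions G_{i,h}: S → [0,∞) for h ∈ [H], such that for every h ∈ [H] and every s ∈ S: (i) max_{μ_i ∈ Δ(A_i)} (D_{μ_i×π_{-i,h}} − D_{π_h})[ r_{i,h} + P_h \bar V_{i,h+1} ](s) ≤ G_{i,h}(s), and (ii) \bar V_{i,h}(s) ≥ min{ D_{π_h}[ r_{i,h} + P_h \bar V_{i,h+1} ](s) + G_{i,h}(s), H−h+1 }. Then \bar V_{i,h}(s) ≥ V^{†,π_{-i}}_{i,h}(s) for every h ∈ [H] and s ∈ S. -/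
open Finset

/-- A probability vector on a finite type. -/
def IsDist {α : Type*} [Fintype α] (p : α → ℝ) : Prop :=
  (∀ a, 0 ≤ p a) ∧ ∑ a, p a = 1

/-- Combine player `i`'s action with a profile of actions of the other players into a
joint action. -/
def combine {m : ℕ} {A : Fin m → Type*} (i : Fin m) (ai : A i)
    (an : ∀ j : {j : Fin m // j ≠ i}, A j.1) (j : Fin m) : A j :=
  if h : j = i then cast (congrArg A h).symm ai else an ⟨j, h⟩

/-- Restrict a joint action to the players other than `i`. -/
def restrict {m : ℕ} {A : Fin m → Type*} (i : Fin m) (a : ∀ j, A j)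
    (j : {j : Fin m // j ≠ i}) : A j.1 :=
  a j.1

/-- Marginal, on the actions of all players other than `i`, of a distribution `p` over
joint actions. -/
noncomputable def marg {m : ℕ} {A : Fin m → Type*} [∀ j, Fintype (A j)] (i : Fin m)
    (p : (∀ j, A j) → ℝ) (an : ∀ j : {j : Fin m // j ≠ i}, A j.1) : ℝ :=
  ∑ ai : A i, p (combine i ai an)

/-- The value function `V^π_h(s)` of a Markov joint policy `π` in the Markov game with
horizon `H`, transition probabilities `P` and (a fixed player's) rewards `rew`.  Steps
are zero-based: `h` ranges over `0, 1, …, H-1` and `jointV H P rew π H s = 0`. -/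
noncomputable def jointV {S : Type*} [Fintype S] {m : ℕ} {A : Fin m → Type*}
    [∀ j, Fintype (A j)] (H : ℕ) (P : ℕ → S → (∀ j, A j) → S → ℝ)
    (rew : ℕ → S → (∀ j, A j) → ℝ) (π : ℕ → S → (∀ j, A j) → ℝ) : ℕ → S → ℝ
  | h, s =>
    if _hh : h < H then
      ∑ a, π h s a * (rew h s a + ∑ s', P h s a s' * jointV H P rew π (h + 1) s')
    else 0
  termination_by h _ => H - h
  decreasing_by omega

lemma combine_apply_i {m : ℕ} {A : Fin m → Type*} (i : Fin m) (ai : A i)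
    (an : ∀ j : {j : Fin m // j ≠ i}, A j.1) : combine i ai an i = ai := by
  simp [combine]

lemma restrict_combine {m : ℕ} {A : Fin m → Type*} (i : Fin m) (ai : A i)
    (an : ∀ j : {j : Fin m // j ≠ i}, A j.1) : _root_.restrict i (combine i ai an) = an := by
  funext j
  simp [_root_.restrict, combine, j.2]

lemma combine_restrict {m : ℕ} {A : Fin m → Type*} (i : Fin m) (a : ∀ j, A j) :
    combine i (a i) (_root_.restrict i a) = a := by
  funext j
  unfold combine _root_.restrict
  split
  · next h => subst h; rfl
  · rfl

/-- The equivalence between joint actions and pairs (own action, others' actions). -/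
noncomputable def prodEquiv {m : ℕ} {A : Fin m → Type*} (i : Fin m) :
    (A i × ∀ j : {j : Fin m // j ≠ i}, A j.1) ≃ (∀ j, A j) where
  toFun p := combine i p.1 p.2
  invFun a := (a i, restrict i a)
  left_inv p := by
    cases p with
    | mk ai an => simp [combine_apply_i, restrict_combine]
  right_inv a := combine_restrict i a

lemma sum_combine {m : ℕ} {A : Fin m → Type*} [∀ j, Fintype (A j)] (i : Fin m)
    (f : (∀ j, A j) → ℝ) :
    ∑ a, f a = ∑ ai : A i, ∑ an : ∀ j : {j : Fin m // j ≠ i}, A j.1,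
      f (combine i ai an) := by
  calc ∑ a, f a = ∑ p : A i × ∀ j : {j : Fin m // j ≠ i}, A j.1, f (combine i p.1 p.2) :=
        (Fintype.sum_equiv (prodEquiv i) _ _ (fun p => rfl)).symm
    _ = _ := Fintype.sum_prod_type (fun p => f (combine i p.1 p.2))

lemma marg_nonneg {m : ℕ} {A : Fin m → Type*} [∀ j, Fintype (A j)] (i : Fin m)
    {p : (∀ j, A j) → ℝ} (hp : ∀ a, 0 ≤ p a) (an : ∀ j : {j : Fin m // j ≠ i}, A j.1) :
    0 ≤ marg i p an :=
  Finset.sum_nonneg fun ai _ => hp _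

lemma prod_isDist {m : ℕ} {A : Fin m → Type*} [∀ j, Fintype (A j)] (i : Fin m)
    {p : (∀ j, A j) → ℝ} (hp : IsDist p) {μ : A i → ℝ} (hμ : IsDist μ) :
    IsDist (fun a => μ (a i) * marg i p (_root_.restrict i a)) := by
  constructor
  · intro a
    exact mul_nonneg (hμ.1 _) (marg_nonneg i hp.1 _)
  · rw [sum_combine i]
    simp only [combine_apply_i, restrict_combine]
    rw [← Finset.sum_mul_sum]
    have : ∑ an : ∀ j : {j : Fin m // j ≠ i}, A j.1, marg i p an = 1 := by
      unfold marg
      rw [Finset.sum_comm, ← sum_combine i p, hp.2]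
    rw [hμ.2, this, one_mul]

lemma jointV_le {S : Type*} [Fintype S] {m : ℕ} {A : Fin m → Type*}
    [∀ j, Fintype (A j)] {H : ℕ} {P : ℕ → S → (∀ j, A j) → S → ℝ}
    (hP : ∀ h < H, ∀ s a, IsDist (P h s a))
    {rew : ℕ → S → (∀ j, A j) → ℝ}
    (hrew : ∀ h < H, ∀ s a, rew h s a ∈ Set.Icc (0 : ℝ) 1)
    {ρ : ℕ → S → (∀ j, A j) → ℝ}
    (hρ : ∀ h < H, ∀ s, IsDist (ρ h s)) :
    ∀ k h, H - h = k → h ≤ H → ∀ s, jointV H P rew ρ h s ≤ (H : ℝ) - h := by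
  intro k
  induction k with
  | zero =>
    intro h hk hh s
    have hH : h = H := by omega
    rw [jointV, dif_neg (by omega)]
    subst hH; simp
  | succ k ih =>
    intro h hk hh s
    have hhH : h < H := by omega
    rw [jointV, dif_pos hhH]
    have key : ∀ a : ∀ j, A j,
        rew h s a + ∑ s', P h s a s' * jointV H P rew ρ (h + 1) s' ≤ (H : ℝ) - h := by
      intro a
      have h1 : ∑ s', P h s a s' * jointV H P rew ρ (h + 1) s'
          ≤ ∑ s', P h s a s' * ((H : ℝ) - (h + 1 : ℕ)) := by
        apply Finset.sum_le_sum
        intro s' _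
        exact mul_le_mul_of_nonneg_left (ih (h + 1) (by omega) (by omega) s')
          ((hP h hhH s a).1 s')
      rw [← Finset.sum_mul, (hP h hhH s a).2, one_mul] at h1
      have h2 := (hrew h hhH s a).2
      push_cast at h1 ⊢
      linarith
    calc ∑ a, ρ h s a * (rew h s a + ∑ s', P h s a s' * jointV H P rew ρ (h + 1) s')
        ≤ ∑ a, ρ h s a * ((H : ℝ) - h) :=
          Finset.sum_le_sum fun a _ =>
            mul_le_mul_of_nonneg_left (key a) ((hρ h hhH s).1 a)
      _ = (H : ℝ) - h := by rw [← Finset.sum_mul, (hρ h hhH s).2, one_mul]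

/-- In a finite Markov game, if the estimates `Vbar` satisfy the
per-state no-regret condition (i) and the optimism condition (ii) with respect to the
bonus functions `G`, then `Vbar` upper bounds the best-response value of player `i`
against `π₋ᵢ`, i.e. `Vbar h s ≥ V^{π_i† × π_{-i}}_{i,h}(s)` for every Markov policy
`π_i†` of player `i`, every step `h ∈ [H]` and every state `s`. -/
theorem statement_0 {S : Type*} [Fintype S] {m H : ℕ} {A : Fin m → Type*}
    [∀ j, Fintype (A j)]
    (P : ℕ → S → (∀ j, A j) → S → ℝ)
    (hP : ∀ h < H, ∀ s a, IsDist (P h s a))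
    (rew : Fin m → ℕ → S → (∀ j, A j) → ℝ)
    (hrew : ∀ i, ∀ h < H, ∀ s a, rew i h s a ∈ Set.Icc (0 : ℝ) 1)
    (π : ℕ → S → (∀ j, A j) → ℝ)
    (hπ : ∀ h < H, ∀ s, IsDist (π h s))
    (i : Fin m)
    (Vbar : ℕ → S → ℝ) (hVbarH : ∀ s, Vbar H s = 0)
    (G : ℕ → S → ℝ) (hG : ∀ h < H, ∀ s, 0 ≤ G h s)
    -- (i) per-state no-regret:
    -- `max_{μ ∈ Δ(A_i)} (D_{μ × π_{-i,h}} - D_{π_h})[r_{i,h} + P_h Vbar_{h+1}](s) ≤ G h s`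
    (hCCE : ∀ h < H, ∀ s, ∀ μ : A i → ℝ, IsDist μ →
      (∑ a, μ (a i) * marg i (π h s) (restrict i a) *
          (rew i h s a + ∑ s', P h s a s' * Vbar (h + 1) s')) -
        (∑ a, π h s a * (rew i h s a + ∑ s', P h s a s' * Vbar (h + 1) s')) ≤ G h s)
    -- (ii) optimism:
    -- `Vbar h s ≥ min (D_{π_h}[r_{i,h} + P_h Vbar_{h+1}](s) + G h s) (H - h)`
    (hOpt : ∀ h < H, ∀ s,
      min ((∑ a, π h s a * (rew i h s a + ∑ s', P h s a s' * Vbar (h + 1) s')) + G h s)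
          ((H : ℝ) - (h : ℝ)) ≤ Vbar h s) :
    ∀ h < H, ∀ s, ∀ πdag : ℕ → S → A i → ℝ, (∀ h' < H, ∀ s', IsDist (πdag h' s')) →
      jointV H P (rew i)
          (fun h' s' a => πdag h' s' (a i) * marg i (π h' s') (restrict i a)) h s
        ≤ Vbar h s := by
  
  intro h0 hh0 s0 πdag hπd
  have hρ : ∀ h < H, ∀ s,
      IsDist (fun a => πdag h s (a i) * marg i (π h s) (_root_.restrict i a)) :=
    fun h hh s => prod_isDist i (hπ h hh s) (hπd h hh s)
  suffices key : ∀ k h, H - h = k → h < H → ∀ s,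
      jointV H P (rew i)
        (fun h' s' a => πdag h' s' (a i) * marg i (π h' s') (_root_.restrict i a)) h s
        ≤ Vbar h s from key _ h0 rfl hh0 s0
  intro k
  induction k with
  | zero => intro h hk hh; omega
  | succ k ih =>
    intro h hk hh s
    refine le_trans (le_min ?_ (jointV_le hP (hrew i) hρ (H - h) h rfl hh.le s))
      (hOpt h hh s)
    rw [jointV, dif_pos hh]
    have hmono : ∑ a, (πdag h s (a i) * marg i (π h s) (_root_.restrict i a)) *
          (rew i h s a + ∑ s', P h s a s' *
            jointV H P (rew i)
              (fun h' s' a => πdag h' s' (a i) * marg i (π h' s') (_root_.restrict i a))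
              (h + 1) s')
        ≤ ∑ a, (πdag h s (a i) * marg i (π h s) (_root_.restrict i a)) *
          (rew i h s a + ∑ s', P h s a s' * Vbar (h + 1) s') := by
      apply Finset.sum_le_sum
      intro a _
      refine mul_le_mul_of_nonneg_left ?_ ((hρ h hh s).1 a)
      refine add_le_add le_rfl ?_
      apply Finset.sum_le_sum
      intro s' _
      refine mul_le_mul_of_nonneg_left ?_ ((hP h hh s a).1 s')
      by_cases hE : h + 1 = H
      · rw [jointV, dif_neg (by omega), hE, hVbarH]
      · exact ih (h + 1) (by omega) (by omega) s'
    have hcce := hCCE h hh s (πdag h s) (hπd h hh s)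
    calc ∑ a, (πdag h s (a i) * marg i (π h s) (_root_.restrict i a)) *
          (rew i h s a + ∑ s', P h s a s' *
            jointV H P (rew i)
              (fun h' s' a => πdag h' s' (a i) * marg i (π h' s') (_root_.restrict i a))
              (h + 1) s')
        ≤ ∑ a, (πdag h s (a i) * marg i (π h s) (_root_.restrict i a)) *
          (rew i h s a + ∑ s', P h s a s' * Vbar (h + 1) s') := hmono
      _ ≤ (∑ a, π h s a * (rew i h s a + ∑ s', P h s a s' * Vbar (h + 1) s')) + G h s := by
          linarith [hcce]
end

section
/- (Separation between Π^Mar-CCE and CCE in the sequential rock–paper–scissors game.) Let H ≥ 2 and consider the two-player zero-sum Markov game with a single state s₀, horizon H, action sets A₁ = A₂ = {R, P, S}, and stage rewards r₁(a₁, a₂) equal to 1 if a₁ beats a₂ (R beats S, P beats R, S beats P), 1/2 if a₁ = a₂, and 0 otherwise, with r₂ = 1 − r₁, the same at every step. Let Λ be the uniform mixture over the three joint policies π^R, π^P, π^S, where under π^a both players deterministically play a at every step; so V₁^Λ := (1/3) Σ_{a} V₁^{π^a} = H/2, and Λ_{-1} denotes the induced opponent process in which, with probability 1/3 each, player 2 plays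 one fixed action at all H steps. Then: (i) for every Markov policy μ = (μ_h)_{h∈[H]} of player 1 (a sequence of distributions on {R,P,S}), the expected total reward of player 1 against Λ_{-1} equals H/2, and symmetrically for player 2; hence no Markov-policy deviation improves on Λ, i.e., CCEGap^{Π^Mar}(Λ) = 0; (ii) there exists a history-dependent policy of player 1 (choosing its step-h action distribution as a function of its own past actions and rewards) whose expected total reward against Λ_{-1} equals H − 1/2; hence CCEGap(Λ) ≥ H/2 − 1/2 ≥ H/4. -/
open Finset

/-- Player 1's stage reward in rock–paper–scissors, with actions encoded in `ZMod 3`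
(`0 = R`, `1 = P`, `2 = S`), so that `a` beats `b` iff `a = b + 1`:  reward `1` if `a`
beats `b`, `1/2` if `a = b`, and `0` otherwise.  Player 2's reward is `1 - rps a b`. -/
noncomputable def rps (a b : ZMod 3) : ℝ :=
  if a = b + 1 then 1 else if a = b then 1 / 2 else 0

/-- Expected total reward of player 1 from step `h` on (zero-based, horizon `H`) when
player 1 plays the history-dependent policy `σ` (a distribution over actions given the
list of its own past (action, reward) pairs, most recent first) against an opponent who
plays the fixed action `b` at every step. -/
noncomputable def histVal (H : ℕ) (σ : List (ZMod 3 × ℝ) → ZMod 3 → ℝ) (b : ZMod 3) :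
    ℕ → List (ZMod 3 × ℝ) → ℝ
  | h, hist =>
    if _hh : h < H then
      ∑ a : ZMod 3, σ hist a * (rps a b + histVal H σ b (h + 1) ((a, rps a b) :: hist))
    else 0
  termination_by h _ => H - h
  decreasing_by omega

lemma rps_split (a b : ZMod 3) :
    rps a b = (if b = a - 1 then (1:ℝ) else 0) + (if b = a then 1/2 else 0) := by
  unfold rps
  have hiff : b = a - 1 ↔ a = b + 1 := by constructor <;> (intro h; rw [h]; ring)
  by_cases h1 : a = b + 1 <;> by_cases h2 : a = b
  · exfalso; have : b = b + 1 := h2 ▸ h1; simp at this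
  · rw [if_pos h1, if_pos (hiff.mpr h1), if_neg (fun h => h2 h.symm)]; ring
  · rw [if_neg h1, if_pos h2, if_neg (fun h => h1 (hiff.mp h)), if_pos h2.symm]; ring
  · rw [if_neg h1, if_neg h2, if_neg (fun h => h1 (hiff.mp h)),
        if_neg (fun h => h2 h.symm)]; ring

lemma rps_sum (a : ZMod 3) : ∑ b : ZMod 3, rps a b = 3/2 := by
  simp only [rps_split, Finset.sum_add_distrib]
  rw [Finset.sum_ite_eq' Finset.univ (a-1) (fun _ => (1:ℝ)),
      Finset.sum_ite_eq' Finset.univ a (fun _ => (1/2:ℝ))]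
  norm_num

lemma rps_split' (a b : ZMod 3) :
    rps b a = (if b = a + 1 then (1:ℝ) else 0) + (if b = a then 1/2 else 0) := by
  unfold rps
  by_cases h1 : b = a + 1 <;> by_cases h2 : b = a
  · exfalso; have : a = a + 1 := h2 ▸ h1; simp at this
  all_goals simp [h1, h2]

lemma rps_sum' (a : ZMod 3) : ∑ b : ZMod 3, rps b a = 3/2 := by
  simp only [rps_split', Finset.sum_add_distrib]
  rw [Finset.sum_ite_eq' Finset.univ (a+1) (fun _ => (1:ℝ)),
      Finset.sum_ite_eq' Finset.univ a (fun _ => (1/2:ℝ))]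
  norm_num

lemma rps_self (a : ZMod 3) : rps a a = 1/2 := by
  unfold rps
  rw [if_neg (by simp), if_pos rfl]

lemma rps_beats (b : ZMod 3) : rps (b+1) b = 1 := by
  unfold rps; rw [if_pos rfl]

/-- decode the opponent's action from own action `a` and received reward `r`,
and respond with the beating action. -/
noncomputable def decode (a : ZMod 3) (r : ℝ) : ZMod 3 :=
  if r = 1 then a else if r = 1/2 then a + 1 else a + 2

noncomputable def target : List (ZMod 3 × ℝ) → ZMod 3
  | [] => 0
  | (a, r) :: _ => decode a r

noncomputable def mySigma (hist : List (ZMod 3 × ℝ)) (a : ZMod 3) : ℝ :=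
  if a = target hist then 1 else 0

lemma mySigma_dist (hist : List (ZMod 3 × ℝ)) : IsDist (mySigma hist) := by
  constructor
  · intro a; unfold mySigma; split <;> norm_num
  · unfold mySigma
    rw [Finset.sum_ite_eq' Finset.univ (target hist) (fun _ => (1:ℝ)) ]
    simp

lemma decode_correct (a b : ZMod 3) : decode a (rps a b) = b + 1 := by
  unfold rps decode
  by_cases h1 : a = b + 1 <;> by_cases h2 : a = b
  · exfalso; have : b = b + 1 := h2 ▸ h1; simp at this
  · rw [if_pos h1, if_pos rfl, h1]
  · rw [if_neg h1, if_pos h2, if_neg (by norm_num), if_pos rfl, h2]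
  · rw [if_neg h1, if_neg h2, if_neg (by norm_num), if_neg (by norm_num)]
    -- a ≠ b + 1, a ≠ b  ⇒  a = b + 2  ⇒  a + 2 = b + 4 = b + 1
    have h3 : a = b + 2 := by
      have : a - b ≠ 1 := fun h => h1 (by rw [← h]; ring)
      have h4 : a - b ≠ 0 := fun h => h2 (by
        have := sub_eq_zero.mp h; exact this)
      -- a - b ∈ ZMod 3, nonzero, ≠ 1 ⇒ = 2
      have h5 : a - b = 2 := by
        revert this h4
        generalize a - b = c
        revert c; decide
      rw [← h5]; ring
    rw [h3, show b + 2 + 2 = b + 4 by ring, show (4:ZMod 3) = 1 from by decide]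

lemma sigma_step (hist : List (ZMod 3 × ℝ)) (f : ZMod 3 → ℝ) :
    ∑ a : ZMod 3, mySigma hist a * f a = f (target hist) := by
  unfold mySigma
  have h : ∀ a, (if a = target hist then (1:ℝ) else 0) * f a
      = if a = target hist then f a else 0 := fun a => by split <;> simp
  rw [Finset.sum_congr rfl (fun a _ => h a),
      Finset.sum_ite_eq' Finset.univ (target hist) f]
  simp

lemma key (H : ℕ) (b : ZMod 3) :
    ∀ n h, H ≤ h + n → ∀ a tail,
      histVal H mySigma b h ((a, rps a b) :: tail) = ((H - h : ℕ) : ℝ) := by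
  intro n
  induction n with
  | zero =>
    intro h hh a tail
    rw [histVal, dif_neg (by omega)]
    rw [Nat.sub_eq_zero_of_le (by omega)]
    norm_num
  | succ n ih =>
    intro h hh a tail
    by_cases hhH : h < H
    · rw [histVal, dif_pos hhH, sigma_step]
      have ht : target ((a, rps a b) :: tail) = b + 1 := decode_correct a b
      rw [ht, ih (h+1) (by omega) (b+1) _, rps_beats]
      have : (H - h : ℕ) = (H - (h+1) : ℕ) + 1 := by omega
      rw [this]
      push_cast
      ring
    · rw [histVal, dif_neg hhH]
      rw [Nat.sub_eq_zero_of_le (by omega)]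
      norm_num

/-- separation between `Π^Mar`-CCE and CCE in sequential
rock–paper–scissors.  Let `Λ` be the uniform mixture of the three joint policies in
which both players constantly play the same fixed action; its value for player 1 is
`V₁^Λ = (1/3) ∑_a H · rps a a = H/2`, and against `Λ₋₁` the opponent plays one constant
action for all `H` steps, chosen uniformly among the three.  Then: (i) every Markov
policy `μ` of player 1 has value exactly `H/2` against `Λ₋₁` (and symmetrically for
player 2), so `CCEGap^{Π^Mar}(Λ) = 0`; and (ii) some history-dependent policy `σ` of
player 1 achieves value `H - 1/2` against `Λ₋₁`, whence
`CCEGap(Λ) ≥ (H - 1/2) - H/2 ≥ H/4`. -/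
theorem statement_10 (H : ℕ) (hH : 2 ≤ H) :
    -- `V₁^Λ = H/2`
    ((1 / 3 : ℝ) * ∑ a : ZMod 3, (H : ℝ) * rps a a = H / 2) ∧
    -- (i) every Markov deviation of player 1 is worth exactly `H/2`
    (∀ μ : ℕ → ZMod 3 → ℝ, (∀ h < H, IsDist (μ h)) →
      (1 / 3 : ℝ) * ∑ b : ZMod 3, ∑ h ∈ Finset.range H, ∑ a : ZMod 3, μ h a * rps a b
        = H / 2) ∧
    -- … and symmetrically for player 2 (whose stage reward is `1 - rps b a`)
    (∀ ν : ℕ → ZMod 3 → ℝ, (∀ h < H, IsDist (ν h)) →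
      (1 / 3 : ℝ) * ∑ b : ZMod 3, ∑ h ∈ Finset.range H, ∑ a : ZMod 3,
          ν h a * (1 - rps b a) = H / 2) ∧
    -- (ii) a history-dependent deviation of player 1 is worth `H - 1/2`,
    -- hence `CCEGap(Λ) ≥ H/2 - 1/2 ≥ H/4`
    (∃ σ : List (ZMod 3 × ℝ) → ZMod 3 → ℝ, (∀ hist, IsDist (σ hist)) ∧
      (1 / 3 : ℝ) * ∑ b : ZMod 3, histVal H σ b 0 [] = (H : ℝ) - 1 / 2) ∧
    ((H : ℝ) - 1 / 2) - (H : ℝ) / 2 ≥ (H : ℝ) / 4 := by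
  have card3 : (Finset.univ : Finset (ZMod 3)).card = 3 := by decide
  refine ⟨?_, ?_, ?_, ?_, ?_⟩
  · simp only [rps_self]
    rw [Finset.sum_const, card3]
    push_cast; ring
  · intro μ hμ
    have : ∀ b : ZMod 3, ∑ h ∈ Finset.range H, ∑ a : ZMod 3, μ h a * rps a b
        = ∑ h ∈ Finset.range H, ∑ a : ZMod 3, μ h a * rps a b := fun _ => rfl
    rw [Finset.sum_comm]
    have step : ∀ h ∈ Finset.range H,
        (∑ b : ZMod 3, ∑ a : ZMod 3, μ h a * rps a b) = 3/2 := by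
      intro h hh
      rw [Finset.sum_comm]
      have : ∀ a : ZMod 3, ∑ b : ZMod 3, μ h a * rps a b = μ h a * (3/2) := by
        intro a
        rw [← Finset.mul_sum, rps_sum]
      rw [Finset.sum_congr rfl (fun a _ => this a), ← Finset.sum_mul,
          (hμ h (Finset.mem_range.mp hh)).2]
      ring
    rw [Finset.sum_congr rfl step, Finset.sum_const, Finset.card_range]
    push_cast; ring
  · intro ν hν
    rw [Finset.sum_comm]
    have step : ∀ h ∈ Finset.range H,
        (∑ b : ZMod 3, ∑ a : ZMod 3, ν h a * (1 - rps b a)) = 3/2 := by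
      intro h hh
      rw [Finset.sum_comm]
      have : ∀ a : ZMod 3, ∑ b : ZMod 3, ν h a * (1 - rps b a) = ν h a * (3/2) := by
        intro a
        rw [← Finset.mul_sum]
        congr 1
        rw [Finset.sum_sub_distrib, rps_sum' a, Finset.sum_const, card3]
        norm_num
      rw [Finset.sum_congr rfl (fun a _ => this a), ← Finset.sum_mul,
          (hν h (Finset.mem_range.mp hh)).2]
      ring
    rw [Finset.sum_congr rfl step, Finset.sum_const, Finset.card_range]
    push_cast; ring
  · refine ⟨mySigma, mySigma_dist, ?_⟩
    have hval : ∀ b : ZMod 3, histVal H mySigma b 0 [] = rps 0 b + ((H - 1 : ℕ) : ℝ) := by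
      intro b
      rw [histVal, dif_pos (by omega), sigma_step]
      have ht : target ([] : List (ZMod 3 × ℝ)) = 0 := rfl
      rw [ht, key H b (H) 1 (by omega) 0 []]
    rw [Finset.sum_congr rfl (fun b _ => hval b), Finset.sum_add_distrib, rps_sum 0,
        Finset.sum_const, card3]
    have h1 : (1:ℕ) ≤ H := by omega
    push_cast [h1]
    ring
  · have : (2:ℝ) ≤ H := by exact_mod_cast hH
    linarith
end

section
/- (Pigeonhole bound for sequentially weighted harmonic sums.) Let S be a finite set, T ∈ ℕ, ι ≥ 1, and let w^1, …, w^{T+1} be probability distributions on S (so w^t_s ≥ 0 and Σ_{s∈S} w^t_s = 1 for each t). Define W^t_s := Σ_{τ=1}^t w^τ_s. Then Σ_{t=1}^{T} Σ_{s∈S} w^{t+1}_s / ( W^t_s + ι ) ≤ 2 |S| log( 1 + (T+1)/ι ). -/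
open Finset

lemma aux_log_step (a b : ℝ) (ha : 1 ≤ a) (hb0 : 0 ≤ b) (hb1 : b ≤ 1) :
    b / a ≤ 2 * (Real.log (a + b) - Real.log a) := by
  have ha0 : 0 < a := lt_of_lt_of_le one_pos ha
  set u : ℝ := b / a with hu
  have hu0 : 0 ≤ u := div_nonneg hb0 ha0.le
  have hu1 : u ≤ 1 := by
    rw [hu, div_le_one ha0]; exact hb1.trans ha
  have hlogeq : Real.log (a + b) - Real.log a = Real.log (1 + u) := by
    rw [hu, ← Real.log_div (by positivity) (ne_of_gt ha0)]
    congr 1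
    field_simp
  rw [hlogeq]
  have h1 : 1 - (1 + u)⁻¹ ≤ Real.log (1 + u) :=
    Real.one_sub_inv_le_log_of_pos (by positivity)
  have h2 : u / 2 ≤ 1 - (1 + u)⁻¹ := by
    have : 1 - (1 + u)⁻¹ = u / (1 + u) := by
      field_simp
      ring
    rw [this]
    apply div_le_div_of_nonneg_left hu0 (by positivity) (by linarith)
  linarith

/-- pigeonhole bound for sequentially weighted harmonic sums.
If `w^1, …, w^{T+1}` are probability distributions on a finite set `S`,
`W^t_s := ∑_{τ=1}^t w^τ_s`, and `ι ≥ 1`, then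
`∑_{t=1}^{T} ∑_{s ∈ S} w^{t+1}_s / (W^t_s + ι) ≤ 2 |S| log(1 + (T+1)/ι)`. -/
theorem statement_11 {S : Type*} [Fintype S] (T : ℕ) (ι : ℝ) (hι : 1 ≤ ι)
    (w : ℕ → S → ℝ)
    (hw : ∀ t, 1 ≤ t → t ≤ T + 1 → (∀ s, 0 ≤ w t s) ∧ (∑ s, w t s) = 1) :
    ∑ t ∈ Finset.Icc 1 T, ∑ s, w (t + 1) s / ((∑ τ ∈ Finset.Icc 1 t, w τ s) + ι)
      ≤ 2 * (Fintype.card S) * Real.log (1 + (T + 1) / ι) := by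
  have hι0 : (0:ℝ) < ι := lt_of_lt_of_le one_pos hι
  -- basic facts about w
  have hwnn : ∀ t s, 1 ≤ t → t ≤ T + 1 → 0 ≤ w t s := fun t s h1 h2 => (hw t h1 h2).1 s
  have hwle1 : ∀ t s, 1 ≤ t → t ≤ T + 1 → w t s ≤ 1 := by
    intro t s h1 h2
    obtain ⟨hnn, hsum⟩ := hw t h1 h2
    calc w t s ≤ ∑ s', w t s' := Finset.single_le_sum (fun s' _ => hnn s') (Finset.mem_univ s)
    _ = 1 := hsum
  set W : ℕ → S → ℝ := fun t s => ∑ τ ∈ Finset.Icc 1 t, w τ s with hW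
  have hWnn : ∀ t s, t ≤ T + 1 → 0 ≤ W t s := by
    intro t s ht
    apply Finset.sum_nonneg
    intro τ hτ
    rw [Finset.mem_Icc] at hτ
    exact hwnn τ s hτ.1 (hτ.2.trans ht)
  have hWub : ∀ s, W (T + 1) s ≤ T + 1 := by
    intro s
    calc W (T + 1) s ≤ ∑ τ ∈ Finset.Icc 1 (T + 1), (1:ℝ) := by
          apply Finset.sum_le_sum
          intro τ hτ
          rw [Finset.mem_Icc] at hτ
          exact hwle1 τ s hτ.1 hτ.2
    _ = T + 1 := by
          rw [Finset.sum_const, Nat.card_Icc]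
          simp
  rw [Finset.sum_comm]
  have key : ∀ s : S, ∑ t ∈ Finset.Icc 1 T, w (t + 1) s / (W t s + ι)
      ≤ 2 * Real.log (1 + (T + 1) / ι) := by
    intro s
    set f : ℕ → ℝ := fun i => Real.log (W (i + 1) s + ι) with hf
    have step : ∀ t ∈ Finset.Icc 1 T, w (t + 1) s / (W t s + ι)
        ≤ 2 * (Real.log (W (t + 1) s + ι) - Real.log (W t s + ι)) := by
      intro t ht
      rw [Finset.mem_Icc] at ht
      have hWstep : W (t + 1) s = W t s + w (t + 1) s := by
        rw [hW]
        simp only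
        rw [← Finset.sum_Icc_succ_top (by omega : 1 ≤ t + 1)]
      rw [hWstep]
      have h1 : 1 ≤ W t s + ι := le_add_of_nonneg_of_le (hWnn t s (by omega)) hι
      have := aux_log_step (W t s + ι) (w (t + 1) s) h1
        (hwnn (t + 1) s (by omega) (by omega)) (hwle1 (t + 1) s (by omega) (by omega))
      calc w (t + 1) s / (W t s + ι) ≤ 2 * (Real.log ((W t s + ι) + w (t + 1) s) - Real.log (W t s + ι)) := this
      _ = 2 * (Real.log ((W t s + w (t + 1) s) + ι) - Real.log (W t s + ι)) := by ring_nf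
    calc ∑ t ∈ Finset.Icc 1 T, w (t + 1) s / (W t s + ι)
        ≤ ∑ t ∈ Finset.Icc 1 T, 2 * (Real.log (W (t + 1) s + ι) - Real.log (W t s + ι)) :=
          Finset.sum_le_sum step
    _ = 2 * ∑ t ∈ Finset.Icc 1 T, (Real.log (W (t + 1) s + ι) - Real.log (W t s + ι)) := by
          rw [Finset.mul_sum]
    _ = 2 * (Real.log (W (T + 1) s + ι) - Real.log (W 1 s + ι)) := by
          congr 1
          rw [show Finset.Icc 1 T = Finset.Ico 1 (T+1) by rw [Finset.Ico_add_one_right_eq_Icc],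
            Finset.sum_Ico_eq_sum_range]
          simp only [Nat.add_sub_cancel]
          have : ∀ i ∈ Finset.range T,
              Real.log (W (1 + i + 1) s + ι) - Real.log (W (1 + i) s + ι)
              = f (i + 1) - f i := by
            intro i _
            simp only [hf]
            ring_nf
          rw [Finset.sum_congr rfl this, Finset.sum_range_sub f]
    _ ≤ 2 * (Real.log ((T + 1) + ι) - Real.log ι) := by
          have hA : Real.log (W (T + 1) s + ι) ≤ Real.log ((T + 1) + ι) := by
            apply Real.log_le_log (by linarith [hWnn (T+1) s le_rfl])
            linarith [hWub s]
          have hB : Real.log ι ≤ Real.log (W 1 s + ι) := by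
            apply Real.log_le_log hι0
            linarith [hWnn 1 s (by omega)]
          linarith
    _ = 2 * Real.log (1 + (T + 1) / ι) := by
          congr 1
          rw [← Real.log_div (by positivity) (ne_of_gt hι0)]
          congr 1
          field_simp
          ring
  calc ∑ s : S, ∑ t ∈ Finset.Icc 1 T, w (t + 1) s / (W t s + ι)
      ≤ ∑ s : S, 2 * Real.log (1 + (T + 1) / ι) := Finset.sum_le_sum (fun s _ => key s)
  _ = 2 * (Fintype.card S) * Real.log (1 + (T + 1) / ι) := by
        rw [Finset.sum_const, Finset.card_univ, nsmul_eq_mul]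
        ring
end

section
/- (Elliptic potential lemma for positive semidefinite increments.) Let d ∈ ℕ, λ₀ ≥ 1, T ∈ ℕ, and let X_1, …, X_{T+1} be d×d real symmetric positive semidefinite matrices with Tr(X_t) ≤ 1 for all t. Define S_t := λ₀ I + Σ_{τ=1}^t X_τ. Then Σ_{t=1}^{T} Tr( X_{t+1} S_t^{−1} ) ≤ 2 d log( 1 + (T+1)/λ₀ ). -/
open Finset

namespace Statement12Aux

open Matrix

variable {d : ℕ}

lemma dot_sq_le (v w : Fin d → ℝ) : (v ⬝ᵥ w)^2 ≤ (v ⬝ᵥ v) * (w ⬝ᵥ w) := by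
  simpa [dotProduct, pow_two] using Finset.sum_mul_sq_le_sq_mul_sq Finset.univ v w

lemma dot_self_nonneg (v : Fin d → ℝ) : 0 ≤ v ⬝ᵥ v :=
  Finset.sum_nonneg fun i _ => mul_self_nonneg _

lemma frob (Y : Matrix (Fin d) (Fin d) ℝ) (v : Fin d → ℝ) :
    (Y *ᵥ v) ⬝ᵥ (Y *ᵥ v) ≤ (Yᵀ * Y).trace * (v ⬝ᵥ v) := by
  have h1 : ∀ i, ((Y *ᵥ v) i)^2 ≤ (∑ j, (Y i j)^2) * (v ⬝ᵥ v) := by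
    intro i
    simpa [Matrix.mulVec, dotProduct, pow_two] using
      Finset.sum_mul_sq_le_sq_mul_sq Finset.univ (fun j => Y i j) v
  have h2 : (Y *ᵥ v) ⬝ᵥ (Y *ᵥ v) = ∑ i, ((Y *ᵥ v) i)^2 := by
    simp [dotProduct, pow_two]
  have h3 : (Yᵀ * Y).trace = ∑ i, ∑ j, (Y i j)^2 := by
    simp [Matrix.trace, Matrix.diag, Matrix.mul_apply, pow_two]
    exact Finset.sum_comm
  calc (Y *ᵥ v) ⬝ᵥ (Y *ᵥ v) = ∑ i, ((Y *ᵥ v) i)^2 := h2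
    _ ≤ ∑ i, (∑ j, (Y i j)^2) * (v ⬝ᵥ v) := Finset.sum_le_sum (fun i _ => h1 i)
    _ = (Yᵀ * Y).trace * (v ⬝ᵥ v) := by rw [h3, ← Finset.sum_mul]


open scoped MatrixOrder in
lemma exists_sqrt' {P : Matrix (Fin d) (Fin d) ℝ} (hP : P.PosSemidef) :
    ∃ R : Matrix (Fin d) (Fin d) ℝ, Rᴴ = R ∧ R * R = P :=
  ⟨CFC.sqrt P, (Matrix.nonneg_iff_posSemidef.mp (CFC.sqrt_nonneg P)).isHermitian,
    CFC.sqrt_mul_sqrt_self P (Matrix.nonneg_iff_posSemidef.mpr hP)⟩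

lemma smsd {M : Matrix (Fin d) (Fin d) ℝ} (hM : M.IsHermitian) :
    (star (hM.eigenvectorUnitary : Matrix (Fin d) (Fin d) ℝ)) * M *
      (hM.eigenvectorUnitary : Matrix (Fin d) (Fin d) ℝ)
      = Matrix.diagonal (RCLike.ofReal ∘ hM.eigenvalues) := by
  have := hM.conjStarAlgAut_star_eigenvectorUnitary
  simpa using this

lemma quad_le_trace {P : Matrix (Fin d) (Fin d) ℝ} (hP : P.PosSemidef) (v : Fin d → ℝ) :
    v ⬝ᵥ P *ᵥ v ≤ P.trace * (v ⬝ᵥ v) := by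
  obtain ⟨R, hRH', hRR⟩ := exists_sqrt' hP
  have hRH : Rᵀ = R := hRH'
  have h1 : v ⬝ᵥ P *ᵥ v = (R *ᵥ v) ⬝ᵥ (R *ᵥ v) := by
    rw [← hRR, ← Matrix.mulVec_mulVec, Matrix.dotProduct_mulVec, ← hRH,
      Matrix.vecMul_transpose, hRH]
  rw [h1, ← hRR]
  calc (R *ᵥ v) ⬝ᵥ (R *ᵥ v) ≤ (Rᵀ * R).trace * (v ⬝ᵥ v) := frob R v
    _ = (R * R).trace * (v ⬝ᵥ v) := by rw [hRH]

lemma psd_trace_nonneg {P : Matrix (Fin d) (Fin d) ℝ} (hP : P.PosSemidef) : 0 ≤ P.trace := by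
  have h : ∀ i, 0 ≤ P i i := by
    intro i
    exact hP.diag_nonneg
  exact Finset.sum_nonneg fun i _ => h i

lemma trace_mul_psd_nonneg {A B : Matrix (Fin d) (Fin d) ℝ} (hA : A.PosSemidef)
    (hB : B.PosSemidef) : 0 ≤ (A * B).trace := by
  obtain ⟨Y, hYH, hYY⟩ : ∃ Y : Matrix (Fin d) (Fin d) ℝ, Yᴴ = Y ∧ Y * Y = A :=
    exists_sqrt' hA
  have hpsd : (Y * B * Y).PosSemidef := by
    have := hB.mul_mul_conjTranspose_same Y
    rwa [hYH] at this
  have h1 : (A * B).trace = (Y * B * Y).trace := by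
    rw [← hYY, Matrix.mul_assoc, Matrix.trace_mul_comm]
  rw [h1]
  exact psd_trace_nonneg hpsd

lemma inv_quad_le {S : Matrix (Fin d) (Fin d) ℝ} (hS : S.PosDef)
    (hge : ∀ w : Fin d → ℝ, w ⬝ᵥ w ≤ w ⬝ᵥ S *ᵥ w) (v : Fin d → ℝ) :
    v ⬝ᵥ S⁻¹ *ᵥ v ≤ v ⬝ᵥ v := by
  set w := S⁻¹ *ᵥ v with hw
  have hSw : S *ᵥ w = v := by
    rw [hw, Matrix.mulVec_mulVec, Matrix.mul_nonsing_inv _ (isUnit_iff_ne_zero.mpr hS.det_pos.ne'),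
      Matrix.one_mulVec]
  have hLHS : v ⬝ᵥ S⁻¹ *ᵥ v = w ⬝ᵥ S *ᵥ w := by
    rw [← hw, dotProduct_comm, ← hSw]
  rw [hLHS]
  set a := w ⬝ᵥ S *ᵥ w with ha
  rcases le_or_gt a 0 with h | h
  · exact h.trans (dot_self_nonneg v)
  · have hcs : a^2 ≤ (v ⬝ᵥ v) * a := by
      have h1 : ((S *ᵥ w) ⬝ᵥ w)^2 ≤ ((S *ᵥ w) ⬝ᵥ (S *ᵥ w)) * (w ⬝ᵥ w) := dot_sq_le _ _
      rw [hSw] at h1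
      have h2 : v ⬝ᵥ w = a := by rw [dotProduct_comm, ← hSw]
      rw [h2] at h1
      calc a^2 ≤ (v ⬝ᵥ v) * (w ⬝ᵥ w) := h1
        _ ≤ (v ⬝ᵥ v) * a := by
            exact mul_le_mul_of_nonneg_left (hge w) (dot_self_nonneg v)
    nlinarith [hcs, h]

lemma one_add_sum_le_prod {ι : Type*} (s : Finset ι) (f : ι → ℝ) (hf : ∀ i ∈ s, 0 ≤ f i) :
    1 + ∑ i ∈ s, f i ≤ ∏ i ∈ s, (1 + f i) := by
  induction s using Finset.cons_induction with
  | empty => simp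
  | cons a s ha ih =>
    rw [Finset.sum_cons, Finset.prod_cons]
    have hfa : 0 ≤ f a := hf a (Finset.mem_cons_self a s)
    have hsum : 0 ≤ ∑ i ∈ s, f i := Finset.sum_nonneg fun i hi => hf i (Finset.mem_cons_of_mem hi)
    have ih' := ih fun i hi => hf i (Finset.mem_cons_of_mem hi)
    nlinarith [ih', hfa, hsum]

lemma trace_eq_sum_eig {M : Matrix (Fin d) (Fin d) ℝ} (hM : M.IsHermitian) :
    M.trace = ∑ i, hM.eigenvalues i := by
  have h := congrArg Matrix.trace (smsd hM)
  rw [Matrix.trace_mul_cycle,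
    (Matrix.mem_unitaryGroup_iff).mp (hM.eigenvectorUnitary).2, Matrix.one_mul] at h
  rw [h, Matrix.trace_diagonal]
  simp

lemma det_one_add_eq {M : Matrix (Fin d) (Fin d) ℝ} (hM : M.IsHermitian) :
    (1 + M).det = ∏ i, (1 + hM.eigenvalues i) := by
  have hU1 : (star (hM.eigenvectorUnitary : Matrix (Fin d) (Fin d) ℝ)) *
      (hM.eigenvectorUnitary : Matrix (Fin d) (Fin d) ℝ) = 1 :=
    Matrix.UnitaryGroup.star_mul_self _
  have h2 : (star (hM.eigenvectorUnitary : Matrix (Fin d) (Fin d) ℝ)) * (1 + M) *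
      (hM.eigenvectorUnitary : Matrix (Fin d) (Fin d) ℝ)
      = Matrix.diagonal (fun i => 1 + hM.eigenvalues i) := by
    rw [Matrix.mul_add, Matrix.add_mul, Matrix.mul_one, hU1,
      (smsd hM)]
    rw [← Matrix.diagonal_one, Matrix.diagonal_add]
    rfl
  have h3 := congrArg Matrix.det h2
  rw [Matrix.det_mul, Matrix.det_mul, Matrix.det_diagonal] at h3
  have h4 : (star (hM.eigenvectorUnitary : Matrix (Fin d) (Fin d) ℝ)).det *
      (hM.eigenvectorUnitary : Matrix (Fin d) (Fin d) ℝ).det = 1 := by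
    rw [← Matrix.det_mul, hU1, Matrix.det_one]
  calc (1 + M).det = (star (hM.eigenvectorUnitary : Matrix (Fin d) (Fin d) ℝ)).det *
        (1 + M).det * (hM.eigenvectorUnitary : Matrix (Fin d) (Fin d) ℝ).det := by
        rw [mul_comm _ ((1+M).det), mul_assoc, h4, mul_one]
    _ = ∏ i, (1 + hM.eigenvalues i) := by rw [h3]

lemma eig_le {A : Matrix (Fin d) (Fin d) ℝ} (hA : A.IsHermitian) (c : ℝ)
    (hq : ∀ v : Fin d → ℝ, v ⬝ᵥ A *ᵥ v ≤ c * (v ⬝ᵥ v)) (i : Fin d) :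
    hA.eigenvalues i ≤ c := by
  set v : Fin d → ℝ := ⇑(hA.eigenvectorBasis i) with hv
  have hAv : A *ᵥ v = hA.eigenvalues i • v := hA.mulVec_eigenvectorBasis i
  have hvv : 0 < v ⬝ᵥ v := by
    rcases eq_or_lt_of_le (show (0:ℝ) ≤ v ⬝ᵥ v from Finset.sum_nonneg fun j _ => mul_self_nonneg _) with h | h
    · exfalso
      have hv0 : v = 0 := dotProduct_self_eq_zero.mp h.symm
      have := hA.eigenvectorBasis.orthonormal.1 i
      rw [show (hA.eigenvectorBasis i) = 0 from by ext j; simpa using congrFun hv0 j] at this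
      simp at this
    · exact h
  have h1 : v ⬝ᵥ A *ᵥ v = hA.eigenvalues i * (v ⬝ᵥ v) := by
    rw [hAv, dotProduct_smul, smul_eq_mul]
  have := hq v
  rw [h1] at this
  exact le_of_mul_le_mul_right (by linarith [this]) hvv

lemma key_step {S Xm : Matrix (Fin d) (Fin d) ℝ} (hS : S.PosDef)
    (hge : ∀ w : Fin d → ℝ, w ⬝ᵥ w ≤ w ⬝ᵥ S *ᵥ w) (hX : Xm.PosSemidef)
    (htr : Xm.trace ≤ 1) :
    0 ≤ (Xm * S⁻¹).trace ∧
      (Xm * S⁻¹).trace ≤ 2 * (Real.log (S + Xm).det - Real.log S.det) := by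
  have hSinv : S⁻¹.PosDef := hS.inv
  have hdS : S.det ≠ 0 := hS.det_pos.ne'
  set u := (Xm * S⁻¹).trace with hu
  have hu0 : 0 ≤ u := trace_mul_psd_nonneg hX hSinv.posSemidef
  -- u ≤ 1
  have hu1 : u ≤ 1 := by
    have hB : (1 - S⁻¹ : Matrix (Fin d) (Fin d) ℝ).PosSemidef := by
      refine Matrix.PosSemidef.of_dotProduct_mulVec_nonneg ?_ ?_
      · exact Matrix.isHermitian_one.sub hSinv.isHermitian
      · intro x
        rw [star_trivial, Matrix.sub_mulVec, dotProduct_sub, Matrix.one_mulVec,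
          sub_nonneg]
        exact inv_quad_le hS hge x
    have h0 := trace_mul_psd_nonneg hX hB
    rw [Matrix.mul_sub, Matrix.mul_one, Matrix.trace_sub] at h0
    linarith
  -- determinant identity
  obtain ⟨R, hRH, hRR⟩ : ∃ R : Matrix (Fin d) (Fin d) ℝ, Rᴴ = R ∧ R * R = S⁻¹ :=
    exists_sqrt' hSinv.posSemidef
  have hdR : R.det ≠ 0 := by
    intro h
    have : (S⁻¹).det = 0 := by rw [← hRR, Matrix.det_mul, h, mul_zero]
    rw [Matrix.det_nonsing_inv] at this
    exact hdS (by simpa using this)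
  have hM : (R * Xm * R).PosSemidef := by
    have := hX.mul_mul_conjTranspose_same R
    rwa [hRH] at this
  have htrM : (R * Xm * R).trace = u := by
    rw [Matrix.trace_mul_comm (R * Xm) R, ← Matrix.mul_assoc, hRR, Matrix.trace_mul_comm]
  have hdet : (S + Xm).det = S.det * (1 + R * Xm * R).det := by
    have h1 : S + Xm = S * (1 + S⁻¹ * Xm) := by
      rw [Matrix.mul_add, Matrix.mul_one, ← Matrix.mul_assoc,
        Matrix.mul_nonsing_inv _ (isUnit_iff_ne_zero.mpr hdS), Matrix.one_mul]
    have h2 : (1 : Matrix (Fin d) (Fin d) ℝ) + S⁻¹ * Xm = R * (1 + R * Xm * R) * R⁻¹ := by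
      rw [Matrix.mul_add, Matrix.mul_one, Matrix.add_mul,
        Matrix.mul_nonsing_inv _ (isUnit_iff_ne_zero.mpr hdR)]
      congr 1
      calc S⁻¹ * Xm = (R * R) * Xm * (R * R⁻¹) := by
            rw [Matrix.mul_nonsing_inv _ (isUnit_iff_ne_zero.mpr hdR), hRR, Matrix.mul_one]
        _ = R * (R * Xm * R) * R⁻¹ := by simp only [Matrix.mul_assoc]
    have hRinv : (R⁻¹).det = (R.det)⁻¹ := by
      rw [Matrix.det_nonsing_inv, Ring.inverse_eq_inv']
    rw [h1, Matrix.det_mul, h2, Matrix.det_mul, Matrix.det_mul, hRinv]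
    field_simp
  have hdet1 : 1 + u ≤ (1 + R * Xm * R).det := by
    rw [det_one_add_eq hM.isHermitian, ← htrM, trace_eq_sum_eig hM.isHermitian]
    exact one_add_sum_le_prod _ _ fun i _ => hM.eigenvalues_nonneg i
  -- log bounds
  have hpos1u : (0:ℝ) < 1 + u := by linarith
  have hlog1 : Real.log (1 + u) ≤ Real.log (S + Xm).det - Real.log S.det := by
    rw [hdet, Real.log_mul hdS (by nlinarith [hdet1] : (1 + R * Xm * R).det ≠ 0), add_sub_cancel_left]
    exact Real.log_le_log hpos1u hdet1
  have hlog2 : u / 2 ≤ Real.log (1 + u) := by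
    have h1 := Real.one_sub_inv_le_log_of_pos hpos1u
    have hs : (1 + u) * (1 + u)⁻¹ = 1 := mul_inv_cancel₀ hpos1u.ne'
    have hspos : 0 < (1 + u)⁻¹ := inv_pos.mpr hpos1u
    nlinarith [h1, hs, hspos, hu0, hu1]
  refine ⟨hu0, ?_⟩
  linarith [hlog1, hlog2]

lemma psd_sum (s : Finset ℕ) (f : ℕ → Matrix (Fin d) (Fin d) ℝ)
    (h : ∀ i ∈ s, (f i).PosSemidef) : (∑ i ∈ s, f i).PosSemidef := by
  induction s using Finset.cons_induction with
  | empty => simpa using Matrix.PosSemidef.zero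
  | cons a s ha ih =>
    rw [Finset.sum_cons]
    exact ((h a (Finset.mem_cons_self a s)).add
      (ih fun i hi => h i (Finset.mem_cons_of_mem hi)))

lemma smul_one_posdef {lam0 : ℝ} (h : 0 < lam0) :
    (lam0 • (1 : Matrix (Fin d) (Fin d) ℝ)).PosDef := by
  refine Matrix.PosDef.of_dotProduct_mulVec_pos ?_ ?_
  · unfold Matrix.IsHermitian
    simp
  · intro x hx
    rw [star_trivial, Matrix.smul_mulVec, Matrix.one_mulVec, dotProduct_smul,
      smul_eq_mul]
    have hxx : 0 < x ⬝ᵥ x := by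
      rcases eq_or_lt_of_le (Finset.sum_nonneg fun j _ => mul_self_nonneg (x j) :
          (0:ℝ) ≤ x ⬝ᵥ x) with he | hl
      · exact absurd (dotProduct_self_eq_zero.mp he.symm) hx
      · exact hl
    exact mul_pos h hxx

end Statement12Aux

open Statement12Aux Matrix in
/-- elliptic potential lemma for positive semidefinite increments.
If `X_1, …, X_{T+1}` are `d × d` real symmetric positive semidefinite matrices with
`Tr(X_t) ≤ 1`, and `S_t := λ₀ I + ∑_{τ=1}^t X_τ` with `λ₀ ≥ 1`, then
`∑_{t=1}^{T} Tr(X_{t+1} S_t⁻¹) ≤ 2 d log(1 + (T+1)/λ₀)`. -/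
theorem statement_12 (d : ℕ) (lam0 : ℝ) (hlam : 1 ≤ lam0) (T : ℕ)
    (X : ℕ → Matrix (Fin d) (Fin d) ℝ)
    (hX : ∀ t, 1 ≤ t → t ≤ T + 1 → (X t).PosSemidef)
    (htr : ∀ t, 1 ≤ t → t ≤ T + 1 → (X t).trace ≤ 1) :
    ∑ t ∈ Finset.Icc 1 T,
        (X (t + 1) *
          (lam0 • (1 : Matrix (Fin d) (Fin d) ℝ) + ∑ τ ∈ Finset.Icc 1 t, X τ)⁻¹).trace
      ≤ 2 * d * Real.log (1 + (T + 1) / lam0) := by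
  have hlam0 : (0:ℝ) < lam0 := lt_of_lt_of_le one_pos hlam
  set Sm : ℕ → Matrix (Fin d) (Fin d) ℝ :=
    fun t => lam0 • (1 : Matrix (Fin d) (Fin d) ℝ) + ∑ τ ∈ Finset.Icc 1 t, X τ with hSm
  have hPsum : ∀ t, t ≤ T + 1 → (∑ τ ∈ Finset.Icc 1 t, X τ).PosSemidef := fun t ht =>
    psd_sum _ _ fun i hi => hX i (Finset.mem_Icc.mp hi).1 ((Finset.mem_Icc.mp hi).2.trans ht)
  have hSpd : ∀ t, t ≤ T + 1 → (Sm t).PosDef := fun t ht =>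
    (smul_one_posdef hlam0).add_posSemidef (hPsum t ht)
  have hge : ∀ t, t ≤ T + 1 → ∀ v : Fin d → ℝ, v ⬝ᵥ v ≤ v ⬝ᵥ (Sm t) *ᵥ v := by
    intro t ht v
    rw [hSm]
    rw [Matrix.add_mulVec, dotProduct_add, Matrix.smul_mulVec,
      Matrix.one_mulVec, dotProduct_smul, smul_eq_mul]
    have hq : 0 ≤ v ⬝ᵥ (∑ τ ∈ Finset.Icc 1 t, X τ) *ᵥ v := by
      have := (hPsum t ht).dotProduct_mulVec_nonneg v
      rwa [star_trivial] at this
    have hvv : 0 ≤ v ⬝ᵥ v := Finset.sum_nonneg fun j _ => mul_self_nonneg _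
    nlinarith
  have hsplit : ∀ t : ℕ, Sm (t + 1) = Sm t + X (t + 1) := by
    intro t
    rw [hSm]
    simp only
    rw [Finset.sum_Icc_succ_top (Nat.le_add_left 1 t), add_assoc]
  set g : ℕ → ℝ := fun t => Real.log (Sm t).det with hg
  -- per-step bound
  have hstep : ∀ t ∈ Finset.Icc 1 T,
      (X (t + 1) * (Sm t)⁻¹).trace ≤ 2 * (g (t + 1) - g t) := by
    intro t ht
    obtain ⟨ht1, ht2⟩ := Finset.mem_Icc.mp ht
    have hk := key_step (hSpd t (by omega)) (hge t (by omega))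
      (hX (t + 1) (by omega) (by omega)) (htr (t + 1) (by omega) (by omega))
    rw [← hsplit t] at hk
    exact hk.2
  have htel : ∑ t ∈ Finset.Icc 1 T, 2 * (g (t + 1) - g t) = 2 * (g (T + 1) - g 1) := by
    rw [← Finset.mul_sum]
    congr 1
    rw [← Finset.Ico_add_one_right_eq_Icc, Finset.sum_Ico_eq_sum_range]
    simp only [Nat.add_sub_cancel]
    have hc : ∀ k, g (1 + k + 1) - g (1 + k)
        = (fun m => g (m + 1)) (k + 1) - (fun m => g (m + 1)) k := by
      intro k
      simp only [Nat.add_comm 1 k]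
    rw [Finset.sum_congr rfl fun k _ => hc k, Finset.sum_range_sub (fun m => g (m + 1)) T]
  have hg10 : g 0 ≤ g 1 := by
    have hk := key_step (hSpd 0 (by omega)) (hge 0 (by omega))
      (hX 1 le_rfl (by omega)) (htr 1 le_rfl (by omega))
    rw [← hsplit 0] at hk
    linarith [hk.1, hk.2]
  -- upper bound on g (T+1)
  set c : ℝ := lam0 + (T + 1) with hc
  have hcpos : (0:ℝ) < c := by positivity
  have hgT : g (T + 1) ≤ d * Real.log c := by
    have hA := hSpd (T + 1) le_rfl
    have herm := hA.isHermitian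
    have hquad : ∀ v : Fin d → ℝ, v ⬝ᵥ (Sm (T + 1)) *ᵥ v ≤ c * (v ⬝ᵥ v) := by
      intro v
      rw [hSm]
      rw [Matrix.add_mulVec, dotProduct_add, Matrix.smul_mulVec,
        Matrix.one_mulVec, dotProduct_smul, smul_eq_mul]
      have h1 : v ⬝ᵥ (∑ τ ∈ Finset.Icc 1 (T + 1), X τ) *ᵥ v ≤
          (∑ τ ∈ Finset.Icc 1 (T + 1), X τ).trace * (v ⬝ᵥ v) :=
        quad_le_trace (hPsum (T + 1) le_rfl) v
      have h2 : (∑ τ ∈ Finset.Icc 1 (T + 1), X τ).trace ≤ (T + 1 : ℝ) := by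
        rw [Matrix.trace_sum]
        calc ∑ τ ∈ Finset.Icc 1 (T + 1), (X τ).trace ≤ ∑ τ ∈ Finset.Icc 1 (T + 1), 1 :=
              Finset.sum_le_sum fun i hi =>
                htr i (Finset.mem_Icc.mp hi).1 (Finset.mem_Icc.mp hi).2
          _ = (T + 1 : ℝ) := by simp [Nat.card_Icc]
      have hvv : 0 ≤ v ⬝ᵥ v := Finset.sum_nonneg fun j _ => mul_self_nonneg _
      have h3 : (∑ τ ∈ Finset.Icc 1 (T + 1), X τ).trace * (v ⬝ᵥ v) ≤ (T + 1 : ℝ) * (v ⬝ᵥ v) :=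
        mul_le_mul_of_nonneg_right h2 hvv
      rw [hc]
      nlinarith
    have heig : ∀ i, herm.eigenvalues i ≤ c := eig_le herm c hquad
    have heigpos : ∀ i, 0 < herm.eigenvalues i := hA.eigenvalues_pos
    have hdet : (Sm (T + 1)).det = ∏ i, herm.eigenvalues i := by
      have := herm.det_eq_prod_eigenvalues
      simpa using this
    have hdetle : (Sm (T + 1)).det ≤ c ^ d := by
      rw [hdet]
      calc ∏ i, herm.eigenvalues i ≤ ∏ i : Fin d, c :=
            Finset.prod_le_prod (fun i _ => (heigpos i).le) (fun i _ => heig i)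
        _ = c ^ d := by simp
    calc g (T + 1) = Real.log (Sm (T + 1)).det := rfl
      _ ≤ Real.log (c ^ d) := Real.log_le_log hA.det_pos hdetle
      _ = d * Real.log c := by rw [Real.log_pow]
  have hg0 : g 0 = d * Real.log lam0 := by
    rw [hg, hSm]
    simp only [Finset.Icc_eq_empty_of_lt (by omega : (0:ℕ) < 1), Finset.sum_empty, add_zero]
    rw [Matrix.det_smul, Matrix.det_one, mul_one, Fintype.card_fin]
    rw [Real.log_pow]
  -- combine
  have hsum : ∑ t ∈ Finset.Icc 1 T, (X (t + 1) * (Sm t)⁻¹).trace ≤ 2 * (g (T + 1) - g 1) := by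
    rw [← htel]
    exact Finset.sum_le_sum hstep
  have hfinal : 2 * (g (T + 1) - g 1) ≤ 2 * d * Real.log (1 + (T + 1) / lam0) := by
    have hlogdiv : Real.log (1 + (T + 1) / lam0) = Real.log c - Real.log lam0 := by
      have : (1 : ℝ) + (T + 1) / lam0 = c / lam0 := by
        rw [hc]; field_simp
      rw [this, Real.log_div hcpos.ne' hlam0.ne']
    rw [hlogdiv]
    have := hgT
    have := hg10
    have := hg0
    nlinarith [hgT, hg10, hg0]
  calc ∑ t ∈ Finset.Icc 1 T, (X (t + 1) * (Sm t)⁻¹).trace ≤ 2 * (g (T + 1) - g 1) := hsum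
    _ ≤ 2 * d * Real.log (1 + (T + 1) / lam0) := hfinal
end

section
/- (Regret guarantee for Decentralized Optimistic Policy Mirror Descent given optimistic value estimates; Proposition on DOPMD regret.) Let MG be an m-player finite Markov game, and for each i ∈ [m] let Π_i be a finite set of Markov policies of player i. Fix T ∈ ℕ, ε ≥ 0, δ ∈ (0,1), and set η_i := √( log|Π_i| / (H² T) ). Consider any stochastic process in which: Λ_i^1 is uniform on Π_i; at each round t ∈ [T], conditionally on the history F_{t−1}, each player samples π_i^t ∼ Λ_i^t independently across i; then random estimates { V̄_i^{(t), π_i} }_{i∈[m], π_i∈Π_i} are generated (measurably, possibly using fresh randomness) which almost surely satisfy, for all i and π_i ∈ Π_i, V_{i,1}^{π_i × π^t_{-i}}(s_1) ≤ V̄_i^{(t), π_i} ≤ V_{i,1}^{π_i × π^t_{-i}}(s_1) + ε and V̄_i^{(t), π_i} ∈ [0, H]; and the mixtures are updated by Λ_i^{t+1}(π_i) ∝ Λ_i^t(π_i) · exp( η_i · V̄_i^{(t), π_i} ). Then there is a universal constant C such that with probability at least 1−δ: max_{i∈[m]} max_{π_i ∈ Π_i} Σ_{t=1}^T [ V^{π_i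 × Λ^t_{-i}}_{i,1}(s_1) − V^{Λ^t}_{i,1}(s_1) ] ≤ ε T + C · H √( T · log( Σ_{i∈[m]} |Π_i| / δ ) ). -/
open MeasureTheory Finset

/-- The joint (product) policy obtained from one Markov policy per player. -/
noncomputable def prodPol {S : Type*} {m : ℕ} {A : Fin m → Type*}
    [∀ j, Fintype (A j)] (p : ∀ j, ℕ → S → A j → ℝ) : ℕ → S → (∀ j, A j) → ℝ :=
  fun h s a => ∏ j, p j h s (a j)

lemma sum_dist_mul_mem {α : Type*} [Fintype α] {p f : α → ℝ} (hp : IsDist p) {lo hi : ℝ}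
    (h : ∀ a, f a ∈ Set.Icc lo hi) : ∑ a, p a * f a ∈ Set.Icc lo hi := by
  constructor
  · calc lo = ∑ a, p a * lo := by rw [← Finset.sum_mul, hp.2, one_mul]
    _ ≤ ∑ a, p a * f a :=
      Finset.sum_le_sum fun a _ => mul_le_mul_of_nonneg_left (h a).1 (hp.1 a)
  · calc ∑ a, p a * f a ≤ ∑ a, p a * hi :=
      Finset.sum_le_sum fun a _ => mul_le_mul_of_nonneg_left (h a).2 (hp.1 a)
    _ = hi := by rw [← Finset.sum_mul, hp.2, one_mul]

lemma isDist_pi {m : ℕ} {A : Fin m → Type*} [∀ j, Fintype (A j)] {w : ∀ j, A j → ℝ}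
    (hw : ∀ j, IsDist (w j)) : IsDist (fun a : ∀ j, A j => ∏ j, w j (a j)) := by
  constructor
  · exact fun a => Finset.prod_nonneg fun j _ => (hw j).1 (a j)
  · rw [← Fintype.piFinset_univ, ← Finset.prod_univ_sum]
    exact Finset.prod_eq_one fun j _ => (hw j).2

lemma jointV_mem {S : Type*} [Fintype S] {m : ℕ} {A : Fin m → Type*} [∀ j, Fintype (A j)]
    {H : ℕ} {P : ℕ → S → (∀ j, A j) → S → ℝ} {rew : ℕ → S → (∀ j, A j) → ℝ}
    {π : ℕ → S → (∀ j, A j) → ℝ} (hP : ∀ h < H, ∀ s a, IsDist (P h s a))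
    (hrew : ∀ h < H, ∀ s a, rew h s a ∈ Set.Icc (0 : ℝ) 1)
    (hπ : ∀ h < H, ∀ s, IsDist (π h s)) :
    ∀ h s, jointV H P rew π h s ∈ Set.Icc (0 : ℝ) ((H - h : ℕ) : ℝ) := by
  suffices key : ∀ n h, H - h ≤ n → ∀ s,
      jointV H P rew π h s ∈ Set.Icc (0 : ℝ) ((H - h : ℕ) : ℝ) by
    exact fun h s => key (H - h) h le_rfl s
  intro n
  induction n with
  | zero =>
    intro h hle s
    rw [jointV]
    have hh : ¬ h < H := by omega
    simp only [hh, dif_neg, not_false_iff]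
    exact ⟨le_refl 0, by positivity⟩
  | succ n ih =>
    intro h hle s
    rw [jointV]
    by_cases hh : h < H
    · simp only [hh, dif_pos]
      refine sum_dist_mul_mem (hπ h hh s) fun a => ?_
      have h1 := hrew h hh s a
      have h2 : (∑ s', P h s a s' * jointV H P rew π (h + 1) s') ∈
          Set.Icc (0 : ℝ) ((H - (h+1) : ℕ) : ℝ) := by
        refine sum_dist_mul_mem (hP h hh s a) fun s' => ?_
        exact ih (h+1) (by omega) s'
      constructor
      · have := h1.1; have := h2.1; positivity
      · have : ((H - (h+1) : ℕ) : ℝ) + 1 ≤ ((H - h : ℕ) : ℝ) := by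
          push_cast [Nat.cast_sub (by omega : h + 1 ≤ H), Nat.cast_sub (by omega : h ≤ H)]
          ring_nf
          rfl
        linarith [h1.2, h2.2]
    · simp only [hh, dif_neg, not_false_iff]
      exact ⟨le_refl 0, by positivity⟩

lemma exp_le_quadratic {x : ℝ} (h1 : 0 ≤ x) (h2 : x ≤ 1) :
    Real.exp x ≤ 1 + x + x ^ 2 := by
  have h := Real.exp_bound' h1 h2 (n := 2) (by norm_num)
  have : (∑ m ∈ Finset.range 2, x ^ m / m.factorial) = 1 + x := by
    simp [Finset.sum_range_succ]
  rw [this] at h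
  norm_num [Nat.factorial] at h
  nlinarith [sq_nonneg x]

lemma hedge_lam_pos_sum {K : Type*} [Fintype K] [Nonempty K] (η : ℝ)
    (v : ℕ → K → ℝ) (lam : ℕ → K → ℝ)
    (h1 : ∀ q, lam 1 q = 1 / (Fintype.card K : ℝ))
    (hrec : ∀ t, 1 ≤ t → ∀ q, lam (t+1) q =
      lam t q * Real.exp (η * v t q) / ∑ q', lam t q' * Real.exp (η * v t q')) :
    ∀ t, 1 ≤ t → (∀ q, 0 < lam t q) ∧ (∑ q, lam t q) = 1 := by
  intro t ht
  induction t, ht using Nat.le_induction with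
  | base =>
    constructor
    · intro q; rw [h1]; positivity
    · simp only [h1]
      rw [Finset.sum_const, Finset.card_univ, nsmul_eq_mul]
      have : (0:ℝ) < Fintype.card K := by positivity
      field_simp
  | succ t ht ih =>
    have hZ : 0 < ∑ q', lam t q' * Real.exp (η * v t q') :=
      Finset.sum_pos (fun q _ => mul_pos (ih.1 q) (Real.exp_pos _)) ⟨Classical.arbitrary K, Finset.mem_univ _⟩
    constructor
    · intro q
      rw [hrec t ht q]
      exact div_pos (mul_pos (ih.1 q) (Real.exp_pos _)) hZ
    · simp only [hrec t ht]
      rw [← Finset.sum_div, div_self (ne_of_gt hZ)]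

lemma hedge_core {K : Type*} [Fintype K] [Nonempty K] (η Hr : ℝ) (hη : 0 ≤ η)
    (hηH : η * Hr ≤ 1) (hHr : 0 ≤ Hr)
    (v : ℕ → K → ℝ) (lam : ℕ → K → ℝ) (T : ℕ)
    (h1 : ∀ q, lam 1 q = 1 / (Fintype.card K : ℝ))
    (hrec : ∀ t, 1 ≤ t → ∀ q, lam (t+1) q =
      lam t q * Real.exp (η * v t q) / ∑ q', lam t q' * Real.exp (η * v t q'))
    (hv : ∀ t ∈ Icc 1 T, ∀ q, v t q ∈ Set.Icc (0:ℝ) Hr) :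
    ∀ q, η * (∑ t ∈ Icc 1 T, v t q) ≤ Real.log (Fintype.card K) +
      ∑ t ∈ Icc 1 T, (η * ∑ q', lam t q' * v t q' + (η * Hr) ^ 2) := by
  have hps := hedge_lam_pos_sum η v lam h1 hrec
  -- the exact recursion identity for log lam
  have key : ∀ R : ℕ, (∀ t ∈ Icc 1 R, ∀ q, v t q ∈ Set.Icc (0:ℝ) Hr) → ∀ q,
      Real.log (lam (R+1) q) = Real.log (1 / (Fintype.card K : ℝ)) +
        ∑ t ∈ Icc 1 R, (η * v t q -
          Real.log (∑ q', lam t q' * Real.exp (η * v t q'))) := by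
    intro R
    induction R with
    | zero => intro _ q; simp [h1 q]
    | succ R ih =>
      intro hvR q
      have hvR' : ∀ t ∈ Icc 1 R, ∀ q, v t q ∈ Set.Icc (0:ℝ) Hr := by
        intro t ht; exact hvR t (by simp only [Finset.mem_Icc] at ht ⊢; omega)
      have hZ : 0 < ∑ q', lam (R+1) q' * Real.exp (η * v (R+1) q') :=
        Finset.sum_pos (fun q _ => mul_pos ((hps (R+1) (by omega)).1 q) (Real.exp_pos _))
          ⟨Classical.arbitrary K, Finset.mem_univ _⟩
      rw [hrec (R+1) (by omega) q, Real.log_div (ne_of_gt (mul_pos ((hps (R+1) (by omega)).1 q) (Real.exp_pos _))) (ne_of_gt hZ),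
        Real.log_mul (ne_of_gt ((hps (R+1) (by omega)).1 q)) (by positivity),
        Real.log_exp, ih hvR' q, Finset.sum_Icc_succ_top (by omega : 1 ≤ R + 1)]
      ring
  intro q
  have hlog1 : Real.log (lam (T+1) q) ≤ 0 := by
    refine Real.log_nonpos (le_of_lt ((hps (T+1) (by omega)).1 q)) ?_
    calc lam (T+1) q ≤ ∑ q', lam (T+1) q' :=
      Finset.single_le_sum (fun q' _ => le_of_lt ((hps (T+1) (by omega)).1 q')) (Finset.mem_univ q)
    _ = 1 := (hps (T+1) (by omega)).2
  have hlogK : Real.log (1 / (Fintype.card K : ℝ)) = - Real.log (Fintype.card K) := by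
    rw [one_div, Real.log_inv]
  have hZle : ∀ t ∈ Icc 1 T,
      Real.log (∑ q', lam t q' * Real.exp (η * v t q')) ≤
        η * ∑ q', lam t q' * v t q' + (η * Hr) ^ 2 := by
    intro t ht
    have ht1 : 1 ≤ t := (Finset.mem_Icc.1 ht).1
    have hZpos : 0 < ∑ q', lam t q' * Real.exp (η * v t q') :=
      Finset.sum_pos (fun q' _ => mul_pos ((hps t ht1).1 q') (Real.exp_pos _))
        ⟨Classical.arbitrary K, Finset.mem_univ _⟩
    have hstep : (∑ q', lam t q' * Real.exp (η * v t q')) ≤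
        Real.exp (η * ∑ q', lam t q' * v t q' + (η * Hr) ^ 2) := by
      have hb : (∑ q', lam t q' * Real.exp (η * v t q')) ≤
          ∑ q', lam t q' * (1 + η * v t q' + (η * v t q') ^ 2) := by
        refine Finset.sum_le_sum fun q' _ => ?_
        refine mul_le_mul_of_nonneg_left ?_ (le_of_lt ((hps t ht1).1 q'))
        refine exp_le_quadratic (by
          exact mul_nonneg hη (hv t ht q').1) ?_
        calc η * v t q' ≤ η * Hr := mul_le_mul_of_nonneg_left (hv t ht q').2 hη
        _ ≤ 1 := hηH
      have hb2 : (∑ q', lam t q' * (1 + η * v t q' + (η * v t q') ^ 2)) ≤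
          1 + (η * ∑ q', lam t q' * v t q' + (η * Hr) ^ 2) := by
        have e1 : (∑ q', lam t q' * (1 + η * v t q' + (η * v t q') ^ 2)) =
            (∑ q', lam t q') + η * (∑ q', lam t q' * v t q') +
              ∑ q', lam t q' * (η * v t q') ^ 2 := by
          rw [Finset.mul_sum, ← Finset.sum_add_distrib, ← Finset.sum_add_distrib]
          refine Finset.sum_congr rfl fun q' _ => ?_
          ring
        rw [e1, (hps t ht1).2]
        have e2 : (∑ q', lam t q' * (η * v t q') ^ 2) ≤ (η * Hr)^2 := by
          calc (∑ q', lam t q' * (η * v t q') ^ 2) ≤ ∑ q', lam t q' * (η * Hr) ^ 2 := by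
                refine Finset.sum_le_sum fun q' _ => ?_
                refine mul_le_mul_of_nonneg_left ?_ (le_of_lt ((hps t ht1).1 q'))
                have h0 : 0 ≤ η * v t q' := mul_nonneg hη (hv t ht q').1
                have h1 : η * v t q' ≤ η * Hr := mul_le_mul_of_nonneg_left (hv t ht q').2 hη
                nlinarith
          _ = (η * Hr) ^ 2 := by rw [← Finset.sum_mul, (hps t ht1).2, one_mul]
        linarith
      calc (∑ q', lam t q' * Real.exp (η * v t q')) ≤
          1 + (η * ∑ q', lam t q' * v t q' + (η * Hr) ^ 2) := le_trans hb hb2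
      _ ≤ Real.exp (η * ∑ q', lam t q' * v t q' + (η * Hr) ^ 2) := by
          linarith [Real.add_one_le_exp (η * ∑ q', lam t q' * v t q' + (η * Hr) ^ 2)]
    calc Real.log (∑ q', lam t q' * Real.exp (η * v t q')) ≤
        Real.log (Real.exp (η * ∑ q', lam t q' * v t q' + (η * Hr) ^ 2)) :=
      Real.log_le_log hZpos hstep
    _ = _ := Real.log_exp _
  have hid := key T hv q
  have hsplit : ∑ t ∈ Icc 1 T, (η * v t q -
      Real.log (∑ q', lam t q' * Real.exp (η * v t q'))) =
      η * (∑ t ∈ Icc 1 T, v t q) -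
      ∑ t ∈ Icc 1 T, Real.log (∑ q', lam t q' * Real.exp (η * v t q')) := by
    rw [Finset.sum_sub_distrib, Finset.mul_sum]
  have : η * (∑ t ∈ Icc 1 T, v t q) =
      Real.log (lam (T+1) q) + Real.log (Fintype.card K) +
      ∑ t ∈ Icc 1 T, Real.log (∑ q', lam t q' * Real.exp (η * v t q')) := by
    rw [hid, hlogK, hsplit]; ring
  rw [this]
  have hsum_le := Finset.sum_le_sum hZle
  linarith

lemma integrable_of_abs_le {Ω : Type*} [m0 : MeasurableSpace Ω] {μ : MeasureTheory.Measure Ω}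
    [MeasureTheory.IsFiniteMeasure μ] {f : Ω → ℝ} (hf : MeasureTheory.AEStronglyMeasurable f μ)
    {C : ℝ} (h : ∀ ω, |f ω| ≤ C) : MeasureTheory.Integrable f μ := by
  refine MeasureTheory.Integrable.mono' (MeasureTheory.integrable_const C) hf
    (MeasureTheory.ae_of_all _ fun ω => ?_)
  rw [Real.norm_eq_abs]; exact h ω

lemma exp_chord {c l x : ℝ} (hc : 0 < c) (hx : |x| ≤ c) :
    Real.exp (l * x) ≤ Real.cosh (l * c) + (Real.sinh (l * c) / c) * x := by
  have hx1 : -c ≤ x := neg_le_of_abs_le hx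
  have hx2 : x ≤ c := le_of_abs_le hx
  set a : ℝ := (c - x) / (2 * c) with ha_def
  set b : ℝ := (c + x) / (2 * c) with hb_def
  have ha : 0 ≤ a := div_nonneg (by linarith) (by linarith)
  have hb : 0 ≤ b := div_nonneg (by linarith) (by linarith)
  have hab : a + b = 1 := by
    rw [ha_def, hb_def, ← add_div, div_eq_one_iff_eq (by positivity)]
    ring
  have hcvx := convexOn_exp.2 (Set.mem_univ (l * (-c))) (Set.mem_univ (l * c)) ha hb hab
  have harg : a • (l * (-c)) + b • (l * c) = l * x := by
    simp only [smul_eq_mul, ha_def, hb_def]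
    field_simp
    ring
  rw [harg] at hcvx
  refine le_trans hcvx ?_
  rw [Real.cosh_eq, Real.sinh_eq]
  have : Real.exp (l * -c) = Real.exp (-(l * c)) := by ring_nf
  rw [this]
  simp only [smul_eq_mul, ha_def, hb_def]
  field_simp
  ring_nf
  apply le_of_eq
  ring

lemma condexp_exp_le {Ω : Type*} [m0 : MeasurableSpace Ω] {μ : Measure Ω}
    [IsProbabilityMeasure μ] {m : MeasurableSpace Ω} (hm : m ≤ m0) {X : Ω → ℝ}
    (hX : Measurable[m0] X) {c : ℝ} (hc : 0 < c) (hb : ∀ ω, |X ω| ≤ c)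
    (hcond : μ[X|m] =ᵐ[μ] 0) (l : ℝ) :
    μ[fun ω => Real.exp (l * X ω)|m] ≤ᵐ[μ] fun _ => Real.exp (l ^ 2 * c ^ 2 / 2) := by
  have hXint : Integrable X μ := integrable_of_abs_le (m0 := m0) hX.aestronglyMeasurable hb
  have hint1 : Integrable (fun ω => Real.exp (l * X ω)) μ := by
    refine integrable_of_abs_le (m0 := m0) ((hX.const_mul l).exp).aestronglyMeasurable
      (C := Real.exp (|l| * c)) fun ω => ?_
    rw [Real.abs_exp]
    refine Real.exp_le_exp.2 ?_
    calc l * X ω ≤ |l * X ω| := le_abs_self _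
    _ = |l| * |X ω| := abs_mul _ _
    _ ≤ |l| * c := mul_le_mul_of_nonneg_left (hb ω) (abs_nonneg l)
  have hint2 : Integrable (fun ω => Real.cosh (l * c) + (Real.sinh (l * c) / c) * X ω) μ :=
    (integrable_const _).add (hXint.const_mul _)
  have hmono := condExp_mono (m := m) hint1 hint2 (ae_of_all _ fun ω => exp_chord hc (hb ω))
  have heq : μ[fun ω => Real.cosh (l * c) + (Real.sinh (l * c) / c) * X ω|m] =ᵐ[μ]
      fun _ => Real.cosh (l * c) := by
    have h1 : (fun ω => Real.cosh (l * c) + (Real.sinh (l * c) / c) * X ω) =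
        (fun _ => Real.cosh (l * c)) + (Real.sinh (l * c) / c) • X := by
      funext ω; simp [smul_eq_mul]
    rw [h1]
    refine (condExp_add (integrable_const _) (hXint.smul _) m).trans ?_
    have h2 := condExp_smul (μ := μ) (m := m) (Real.sinh (l * c) / c) X
    filter_upwards [h2, hcond] with ω hω hω2
    have hω3 := congrFun (condExp_const (μ := μ) hm (Real.cosh (l * c))) ω
    simp only [Pi.add_apply, hω3, hω, Pi.smul_apply, hω2, Pi.zero_apply, smul_eq_mul,
      mul_zero, add_zero]
  filter_upwards [hmono, heq] with ω h1 h2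
  refine le_trans (h1.trans_eq h2) ?_
  calc Real.cosh (l * c) ≤ Real.exp ((l * c) ^ 2 / 2) := Real.cosh_le_exp_half_sq _
  _ = Real.exp (l ^ 2 * c ^ 2 / 2) := by ring_nf

lemma azuma_mgf {Ω : Type*} [m0 : MeasurableSpace Ω] {μ : Measure Ω} [IsProbabilityMeasure μ]
    (F : Filtration ℕ m0) (c l : ℝ) (hc : 0 < c) :
    ∀ (T : ℕ) (D : ℕ → Ω → ℝ),
      (∀ t, 1 ≤ t → t ≤ T → Measurable[F t] (D t)) →
      (∀ t, 1 ≤ t → t ≤ T → ∀ ω, |D t ω| ≤ c) →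
      (∀ t, 1 ≤ t → t ≤ T → μ[D t|F (t - 1)] =ᵐ[μ] 0) →
      ∫ ω, Real.exp (l * ∑ t ∈ Icc 1 T, D t ω) ∂μ ≤ Real.exp (l ^ 2 * c ^ 2 * T / 2) := by
  intro T
  induction T with
  | zero =>
    intro D _ _ _
    simp [integral_const]
  | succ T ih =>
    intro D hmeas hb hcond
    have hmT : ∀ t, 1 ≤ t → t ≤ T → Measurable[F t] (D t) := fun t h1 h2 => hmeas t h1 (by omega)
    have hbT : ∀ t, 1 ≤ t → t ≤ T → ∀ ω, |D t ω| ≤ c := fun t h1 h2 => hb t h1 (by omega)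
    have hcT : ∀ t, 1 ≤ t → t ≤ T → μ[D t|F (t - 1)] =ᵐ[μ] 0 := fun t h1 h2 => hcond t h1 (by omega)
    have IH := ih D hmT hbT hcT
    set S : Ω → ℝ := fun ω => ∑ t ∈ Icc 1 T, D t ω with hS_def
    have hSmeas : Measurable[F T] S := by
      refine Finset.measurable_sum _ fun t ht => ?_
      have ht' := Finset.mem_Icc.1 ht
      exact (hmeas t ht'.1 (by omega)).mono (F.mono ht'.2) le_rfl
    have hSb : ∀ ω, |S ω| ≤ T * c := by
      intro ω
      calc |S ω| ≤ ∑ t ∈ Icc 1 T, |D t ω| := Finset.abs_sum_le_sum_abs _ _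
      _ ≤ ∑ t ∈ Icc 1 T, c := Finset.sum_le_sum fun t ht =>
          hbT t (Finset.mem_Icc.1 ht).1 (Finset.mem_Icc.1 ht).2 ω
      _ = (T : ℝ) * c := by rw [Finset.sum_const, Nat.card_Icc]; simp [nsmul_eq_mul]
    set f : Ω → ℝ := fun ω => Real.exp (l * S ω) with hf_def
    set g : Ω → ℝ := fun ω => Real.exp (l * D (T + 1) ω) with hg_def
    have hfm : StronglyMeasurable[F T] f :=
      Measurable.stronglyMeasurable ((hSmeas.const_mul l).exp)
    have hfbound : ∀ ω, ‖f ω‖ ≤ Real.exp (|l| * (T * c)) := by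
      intro ω
      rw [Real.norm_eq_abs, Real.abs_exp]
      refine Real.exp_le_exp.2 ?_
      calc l * S ω ≤ |l * S ω| := le_abs_self _
      _ = |l| * |S ω| := abs_mul _ _
      _ ≤ |l| * (T * c) := mul_le_mul_of_nonneg_left (hSb ω) (abs_nonneg l)
    have hfint : Integrable f μ := by
      refine integrable_of_abs_le (hfm.mono (F.le T)).aestronglyMeasurable
        (C := Real.exp (|l| * (T * c))) fun ω => ?_
      have := hfbound ω; rwa [Real.norm_eq_abs] at this
    have hDmeas : Measurable[m0] (D (T+1)) :=
      (hmeas (T+1) (by omega) le_rfl).mono (F.le (T+1)) le_rfl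
    have hgmeas : Measurable[m0] g := (hDmeas.const_mul l).exp
    have hgbound : ∀ ω, ‖g ω‖ ≤ Real.exp (|l| * c) := by
      intro ω
      rw [Real.norm_eq_abs, Real.abs_exp]
      refine Real.exp_le_exp.2 ?_
      calc l * D (T+1) ω ≤ |l * D (T+1) ω| := le_abs_self _
      _ = |l| * |D (T+1) ω| := abs_mul _ _
      _ ≤ |l| * c := mul_le_mul_of_nonneg_left (hb (T+1) (by omega) le_rfl ω) (abs_nonneg l)
    have hgint : Integrable g μ := by
      refine integrable_of_abs_le hgmeas.aestronglyMeasurable (C := Real.exp (|l| * c))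
        fun ω => ?_
      have := hgbound ω; rwa [Real.norm_eq_abs] at this
    have hpull := condExp_stronglyMeasurable_mul_of_bound (F.le T) hfm hgint
      (Real.exp (|l| * (T * c))) (ae_of_all _ hfbound)
    have hce : μ[g|F T] ≤ᵐ[μ] fun _ => Real.exp (l ^ 2 * c ^ 2 / 2) := by
      have := condexp_exp_le (μ := μ) (F.le T) hDmeas hc
        (hb (T+1) (by omega) le_rfl) ?_ l
      · exact this
      · have h := hcond (T+1) (by omega) le_rfl
        simpa using h
    have hce0 : 0 ≤ᵐ[μ] μ[g|F T] :=
      condExp_nonneg (ae_of_all _ fun ω => le_of_lt (Real.exp_pos _))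
    have hsum : ∀ ω, (∑ t ∈ Icc 1 (T+1), D t ω) = S ω + D (T+1) ω := by
      intro ω
      rw [hS_def]
      exact Finset.sum_Icc_succ_top (by omega) _
    have heq1 : ∫ ω, Real.exp (l * ∑ t ∈ Icc 1 (T+1), D t ω) ∂μ = ∫ ω, f ω * g ω ∂μ := by
      refine integral_congr_ae (ae_of_all _ fun ω => ?_)
      show Real.exp (l * ∑ t ∈ Icc 1 (T + 1), D t ω) = f ω * g ω
      rw [hsum ω, mul_add, Real.exp_add]
    have heq2 : ∫ ω, f ω * g ω ∂μ = ∫ ω, f ω * (μ[g|F T]) ω ∂μ := by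
      rw [← integral_condExp (F.le T) (f := fun ω => f ω * g ω)]
      exact integral_congr_ae hpull
    have hle3 : ∫ ω, f ω * (μ[g|F T]) ω ∂μ ≤
        ∫ ω, f ω * Real.exp (l ^ 2 * c ^ 2 / 2) ∂μ := by
      refine integral_mono_ae ?_ (hfint.mul_const _) ?_
      · refine ⟨((hfm.mono (F.le T)).aestronglyMeasurable.mul
          ((stronglyMeasurable_condExp (m := F T)).mono (F.le T)).aestronglyMeasurable), ?_⟩
        refine HasFiniteIntegral.of_bounded
          (C := Real.exp (|l| * (T * c)) * Real.exp (l ^ 2 * c ^ 2 / 2)) ?_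
        filter_upwards [hce, hce0] with ω h1 h2
        rw [Real.norm_eq_abs, abs_mul]
        refine mul_le_mul ?_ ?_ (abs_nonneg _) (le_of_lt (Real.exp_pos _))
        · exact hfbound ω
        · rw [abs_of_nonneg h2]; exact h1
      · filter_upwards [hce] with ω h1
        exact mul_le_mul_of_nonneg_left h1 (le_of_lt (Real.exp_pos _))
    have hle4 : ∫ ω, f ω * Real.exp (l ^ 2 * c ^ 2 / 2) ∂μ ≤
        Real.exp (l ^ 2 * c ^ 2 * T / 2) * Real.exp (l ^ 2 * c ^ 2 / 2) := by
      rw [integral_mul_const]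
      exact mul_le_mul_of_nonneg_right IH (le_of_lt (Real.exp_pos _))
    calc ∫ ω, Real.exp (l * ∑ t ∈ Icc 1 (T+1), D t ω) ∂μ
        = ∫ ω, f ω * (μ[g|F T]) ω ∂μ := by rw [heq1, heq2]
      _ ≤ Real.exp (l ^ 2 * c ^ 2 * T / 2) * Real.exp (l ^ 2 * c ^ 2 / 2) := le_trans hle3 hle4
      _ = Real.exp (l ^ 2 * c ^ 2 * ((T : ℝ) + 1) / 2) := by
          rw [← Real.exp_add]; congr 1; ring
      _ = Real.exp (l ^ 2 * c ^ 2 * ((T + 1 : ℕ) : ℝ) / 2) := by push_cast; ring_nf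

lemma azuma_tail {Ω : Type*} [m0 : MeasurableSpace Ω] {μ : Measure Ω} [IsProbabilityMeasure μ]
    (F : Filtration ℕ m0) (T : ℕ) (hT : 1 ≤ T) (D : ℕ → Ω → ℝ) (c : ℝ) (hc : 0 < c)
    (hmeas : ∀ t, 1 ≤ t → t ≤ T → Measurable[F t] (D t))
    (hb : ∀ t, 1 ≤ t → t ≤ T → ∀ ω, |D t ω| ≤ c)
    (hcond : ∀ t, 1 ≤ t → t ≤ T → μ[D t|F (t - 1)] =ᵐ[μ] 0)
    (ε : ℝ) (hε : 0 ≤ ε) :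
    μ {ω | ε ≤ ∑ t ∈ Icc 1 T, D t ω} ≤
      ENNReal.ofReal (Real.exp (-(ε ^ 2) / (2 * c ^ 2 * T))) := by
  set l : ℝ := ε / (c ^ 2 * T) with hl_def
  have hl : 0 ≤ l := by positivity
  have hmgf := azuma_mgf F c l hc T D hmeas hb hcond
  set S : Ω → ℝ := fun ω => ∑ t ∈ Icc 1 T, D t ω with hS_def
  have hSmeas : Measurable[m0] S := by
    refine Finset.measurable_sum _ fun t ht => ?_
    have ht' := Finset.mem_Icc.1 ht
    exact (hmeas t ht'.1 ht'.2).mono (F.le t) le_rfl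
  have hfint : Integrable (fun ω => Real.exp (l * S ω)) μ := by
    refine integrable_of_abs_le ((hSmeas.const_mul l).exp).aestronglyMeasurable
      (C := Real.exp (l * (T * c))) fun ω => ?_
    · rw [Real.abs_exp]
      refine Real.exp_le_exp.2 (mul_le_mul_of_nonneg_left ?_ hl)
      calc S ω ≤ |S ω| := le_abs_self _
      _ ≤ ∑ t ∈ Icc 1 T, |D t ω| := Finset.abs_sum_le_sum_abs _ _
      _ ≤ ∑ t ∈ Icc 1 T, c := Finset.sum_le_sum fun t ht =>
          hb t (Finset.mem_Icc.1 ht).1 (Finset.mem_Icc.1 ht).2 ω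
      _ = (T : ℝ) * c := by rw [Finset.sum_const, Nat.card_Icc]; simp [nsmul_eq_mul]
  have hmarkov := mul_meas_ge_le_integral_of_nonneg
    (ae_of_all μ fun ω => le_of_lt (Real.exp_pos (l * S ω))) hfint (Real.exp (l * ε))
  have hsub : {ω | ε ≤ S ω} ⊆ {ω | Real.exp (l * ε) ≤ Real.exp (l * S ω)} := by
    intro ω hω
    exact Real.exp_le_exp.2 (mul_le_mul_of_nonneg_left hω hl)
  have hμle : μ {ω | ε ≤ S ω} ≤ μ {ω | Real.exp (l * ε) ≤ Real.exp (l * S ω)} :=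
    measure_mono hsub
  have hA'fin : μ {ω | Real.exp (l * ε) ≤ Real.exp (l * S ω)} ≠ ⊤ := measure_ne_top μ _
  have hAfin : μ {ω | ε ≤ S ω} ≠ ⊤ := measure_ne_top μ _
  have htoReal : (μ {ω | ε ≤ S ω}).toReal ≤ Real.exp (-(ε ^ 2) / (2 * c ^ 2 * T)) := by
    have h1 : (μ {ω | ε ≤ S ω}).toReal ≤
        (μ {ω | Real.exp (l * ε) ≤ Real.exp (l * S ω)}).toReal :=
      ENNReal.toReal_mono hA'fin hμle
    have h2 : (μ {ω | Real.exp (l * ε) ≤ Real.exp (l * S ω)}).toReal ≤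
        Real.exp (l ^ 2 * c ^ 2 * T / 2) / Real.exp (l * ε) := by
      rw [le_div_iff₀ (Real.exp_pos _), mul_comm]
      exact le_trans hmarkov hmgf
    have h3 : Real.exp (l ^ 2 * c ^ 2 * T / 2) / Real.exp (l * ε) =
        Real.exp (l ^ 2 * c ^ 2 * T / 2 - l * ε) := (Real.exp_sub _ _).symm
    have h4 : l ^ 2 * c ^ 2 * T / 2 - l * ε = -(ε ^ 2) / (2 * c ^ 2 * T) := by
      rw [hl_def]
      have hc' : (c : ℝ) ^ 2 ≠ 0 := by positivity
      have hT' : (T : ℝ) ≠ 0 := by positivity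
      field_simp
      ring
    rw [h3, h4] at h2
    exact le_trans h1 h2
  calc μ {ω | ε ≤ S ω} = ENNReal.ofReal ((μ {ω | ε ≤ S ω}).toReal) :=
    (ENNReal.ofReal_toReal hAfin).symm
  _ ≤ ENNReal.ofReal (Real.exp (-(ε ^ 2) / (2 * c ^ 2 * T))) :=
    ENNReal.ofReal_le_ofReal htoReal

lemma prod_update_eval {m : ℕ} {Pc : Fin m → Type*} [∀ i, Fintype (Pc i)]
    (lam : ∀ j, Pc j → ℝ) (i : Fin m) (qs : ∀ j, Pc j) (a : Pc i) :
    (∏ j, lam j (Function.update qs i a j)) =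
      lam i a * ∏ j ∈ Finset.univ \ {i}, lam j (qs j) := by
  rw [Finset.prod_eq_mul_prod_sdiff_singleton_of_mem (Finset.mem_univ i)
    (fun j => lam j (Function.update qs i a j))]
  rw [Function.update_self]
  congr 1
  refine Finset.prod_congr rfl fun j hj => ?_
  have hji : j ≠ i := by
    simp only [Finset.mem_sdiff, Finset.mem_singleton] at hj
    exact hj.2
  rw [Function.update_of_ne hji]

lemma prod_eval_split {m : ℕ} {Pc : Fin m → Type*} [∀ i, Fintype (Pc i)]
    (lam : ∀ j, Pc j → ℝ) (i : Fin m) (qs : ∀ j, Pc j) :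
    (∏ j, lam j (qs j)) = lam i (qs i) * ∏ j ∈ Finset.univ \ {i}, lam j (qs j) :=
  Finset.prod_eq_mul_prod_sdiff_singleton_of_mem (Finset.mem_univ i) (fun j => lam j (qs j))

lemma marginalize {m : ℕ} {Pc : Fin m → Type*} [∀ i, Fintype (Pc i)] (i : Fin m)
    (lam : ∀ j, Pc j → ℝ) (hsum : ∑ q, lam i q = 1) (g : (∀ j, Pc j) → ℝ) :
    ∑ q' : Pc i, lam i q' *
        ∑ qs : ∀ j, Pc j, (∏ j, lam j (qs j)) * g (Function.update qs i q')
      = ∑ qs : ∀ j, Pc j, (∏ j, lam j (qs j)) * g qs := by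
  classical
  have hinv : ∀ x : Pc i × (∀ j, Pc j),
      ((Function.update x.2 i x.1) i,
        Function.update (Function.update x.2 i x.1) i (x.2 i)) = x := by
    intro x
    simp only [Function.update_self, Function.update_idem]
    rw [Function.update_eq_self]
  have φdef : (Pc i × (∀ j, Pc j)) ≃ (Pc i × (∀ j, Pc j)) :=
    ⟨fun x => (x.2 i, Function.update x.2 i x.1),
     fun x => (x.2 i, Function.update x.2 i x.1),
     fun x => hinv x, fun x => hinv x⟩
  have lhs_eq : ∑ q' : Pc i, lam i q' *
      ∑ qs : ∀ j, Pc j, (∏ j, lam j (qs j)) * g (Function.update qs i q') =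
      ∑ x : Pc i × (∀ j, Pc j),
        lam i x.1 * ((∏ j, lam j (x.2 j)) * g (Function.update x.2 i x.1)) := by
    rw [Fintype.sum_prod_type]
    refine Finset.sum_congr rfl fun q' _ => ?_
    rw [Finset.mul_sum]
  rw [lhs_eq]
  have point : ∀ (a : Pc i) (qs : ∀ j, Pc j),
      lam i (qs i) * ((∏ j, lam j (Function.update qs i a j)) *
        g (Function.update (Function.update qs i a) i (qs i))) =
      lam i a * ((∏ j, lam j (qs j)) * g qs) := by
    intro a qs
    rw [Function.update_idem, Function.update_eq_self, prod_update_eval lam i qs a,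
      prod_eval_split lam i qs]
    ring
  have step : ∑ x : Pc i × (∀ j, Pc j),
      lam i x.1 * ((∏ j, lam j (x.2 j)) * g (Function.update x.2 i x.1)) =
      ∑ x : Pc i × (∀ j, Pc j),
      lam i x.1 * ((∏ j, lam j (x.2 j)) * g x.2) := by
    rw [← Equiv.sum_comp
      (⟨fun x => (x.2 i, Function.update x.2 i x.1),
        fun x => (x.2 i, Function.update x.2 i x.1),
        fun x => hinv x, fun x => hinv x⟩ : (Pc i × (∀ j, Pc j)) ≃ (Pc i × (∀ j, Pc j)))
      (fun x => lam i x.1 * ((∏ j, lam j (x.2 j)) * g (Function.update x.2 i x.1)))]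
    refine Finset.sum_congr rfl fun x _ => ?_
    obtain ⟨a, qs⟩ := x
    simpa only [Equiv.coe_fn_mk] using point a qs
  rw [step, Fintype.sum_prod_type]
  have : ∀ qs : ∀ j, Pc j, ∑ q' : Pc i, lam i q' * ((∏ j, lam j (qs j)) * g qs)
      = (∏ j, lam j (qs j)) * g qs := by
    intro qs
    rw [← Finset.sum_mul, hsum, one_mul]
  calc ∑ a : Pc i, ∑ qs : ∀ j, Pc j, lam i a * ((∏ j, lam j (qs j)) * g qs)
      = ∑ qs : ∀ j, Pc j, ∑ a : Pc i, lam i a * ((∏ j, lam j (qs j)) * g qs) :=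
        Finset.sum_comm
    _ = _ := Finset.sum_congr rfl fun qs _ => this qs

lemma sampled_decomp {m : ℕ} {Pc : Fin m → Type*} [∀ i, Fintype (Pc i)] {Ω : Type*}
    (p : ∀ i, Ω → Pc i) (g : (∀ i, Pc i) → ℝ) (ω : Ω) :
    g (fun i => p i ω) = ∑ qs : ∀ i, Pc i,
      Set.indicator {ω' | ∀ i, p i ω' = qs i} (fun _ => (1:ℝ)) ω * g qs := by
  classical
  have : ∀ qs : ∀ i, Pc i,
      Set.indicator {ω' | ∀ i, p i ω' = qs i} (fun _ => (1:ℝ)) ω =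
        if (fun i => p i ω) = qs then 1 else 0 := by
    intro qs
    rw [Set.indicator_apply]
    congr 1
    simp only [Set.mem_setOf_eq, eq_iff_iff, funext_iff]
  simp only [this, ite_mul, one_mul, zero_mul]
  rw [Fintype.sum_ite_eq]

lemma condexp_sampled {Ω : Type*} [m0 : MeasurableSpace Ω] {μ : Measure Ω}
    [IsProbabilityMeasure μ] {m' : MeasurableSpace Ω} (hm : m' ≤ m0)
    {m : ℕ} {Pc : Fin m → Type*} [∀ i, Fintype (Pc i)]
    (p : ∀ i, Ω → Pc i)
    (hmeas : ∀ qs : ∀ i, Pc i, MeasurableSet[m0] {ω | ∀ i, p i ω = qs i})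
    (L : (∀ i, Pc i) → Ω → ℝ)
    (hcond : ∀ qs : ∀ i, Pc i,
      μ[Set.indicator {ω | ∀ i, p i ω = qs i} (fun _ => (1:ℝ)) | m'] =ᵐ[μ] L qs)
    (g : (∀ i, Pc i) → ℝ) :
    μ[fun ω => g (fun i => p i ω) | m'] =ᵐ[μ] fun ω => ∑ qs, L qs ω * g qs := by
  classical
  have hχint : ∀ qs : ∀ i, Pc i,
      Integrable (Set.indicator {ω | ∀ i, p i ω = qs i} (fun _ => (1:ℝ))) μ := by
    intro qs
    refine Integrable.mono' (integrable_const 1)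
      ((measurable_const.indicator (hmeas qs)).aestronglyMeasurable)
      (ae_of_all _ fun ω => ?_)
    rw [Real.norm_eq_abs, Set.indicator_apply]
    split <;> simp
  have hdecomp : (fun ω => g (fun i => p i ω)) =
      ∑ qs : ∀ i, Pc i, g qs •
        Set.indicator {ω' | ∀ i, p i ω' = qs i} (fun _ => (1:ℝ)) := by
    funext ω
    rw [sampled_decomp p g ω]
    simp only [Finset.sum_apply, Pi.smul_apply, smul_eq_mul]
    exact Finset.sum_congr rfl fun qs _ => mul_comm _ _
  rw [hdecomp]
  refine (condExp_finsetSum (fun qs _ => (hχint qs).smul (g qs)) (m := m')).trans ?_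
  have : ∀ qs : ∀ i, Pc i,
      μ[g qs • Set.indicator {ω' | ∀ i, p i ω' = qs i} (fun _ => (1:ℝ)) | m'] =ᵐ[μ]
        g qs • L qs := by
    intro qs
    refine (condExp_smul (g qs)
      (Set.indicator {ω' | ∀ i, p i ω' = qs i} (fun _ => (1:ℝ))) (m := m')).trans ?_
    filter_upwards [hcond qs] with ω hω
    simp only [Pi.smul_apply, hω]
  have hall := eventuallyEq_sum (fun qs _ => this qs) (s := Finset.univ)
  refine hall.trans ?_
  refine Filter.EventuallyEq.of_eq ?_
  funext ω
  simp only [Finset.sum_apply, Pi.smul_apply, smul_eq_mul]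
  exact Finset.sum_congr rfl fun qs _ => mul_comm _ _

lemma measurable_sampled {Ω : Type*} (m' : MeasurableSpace Ω) {m : ℕ} {Pc : Fin m → Type*}
    [∀ i, Fintype (Pc i)] (p : ∀ i, Ω → Pc i)
    (hp : ∀ qs : ∀ i, Pc i, MeasurableSet[m'] {ω | ∀ i, p i ω = qs i})
    (g : (∀ i, Pc i) → ℝ) : Measurable[m'] (fun ω => g (fun i => p i ω)) := by
  have h : (fun ω => g (fun i => p i ω)) = fun ω => ∑ qs : ∀ i, Pc i,
      Set.indicator {ω' | ∀ i, p i ω' = qs i} (fun _ => (1:ℝ)) ω * g qs :=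
    funext fun ω => sampled_decomp p g ω
  rw [h]
  exact Finset.measurable_sum _ fun qs _ =>
    ((measurable_const.indicator (hp qs)).mul_const _)

set_option maxHeartbeats 4000000 in
/-- regret guarantee for Decentralized Optimistic Policy Mirror
Descent given optimistic value estimates.  There is a universal constant `C` such
that, for any finite Markov game, finite Markov policy classes `Pc i` of the players,
learning rates `η_i = √(log |Π_i| / (H² T))`, and any stochastic process in which
`Λ_i^1` is uniform, at each round `t ∈ [T]` the policies `π_i^t` are sampled
conditionally independently across players from `Λ_i^t` given the history `F_{t-1}`,
the estimates `V̄_i^{(t),π_i}` are `F_t`-measurable and a.s. sandwich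
`V_{i,1}^{π_i × π^t_{-i}}(s_1) ≤ V̄ ≤ V_{i,1}^{π_i × π^t_{-i}}(s_1) + ε` with
`V̄ ∈ [0, H]`, and `Λ_i^{t+1}(π_i) ∝ Λ_i^t(π_i) exp(η_i V̄_i^{(t),π_i})`, one has,
with probability at least `1 - δ`:
`max_i max_{π_i} ∑_{t=1}^T (V^{π_i × Λ^t_{-i}}_{i,1}(s_1) - V^{Λ^t}_{i,1}(s_1))
   ≤ ε T + C H √(T log(∑_i |Π_i| / δ))`. -/
theorem statement_13 :
    ∃ C : ℝ, 0 < C ∧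
      ∀ (S : Type) [Fintype S] (m H : ℕ) (A : Fin m → Type) [∀ j, Fintype (A j)]
        (P : ℕ → S → (∀ j, A j) → S → ℝ), (∀ h < H, ∀ s a, IsDist (P h s a)) →
      ∀ rew : Fin m → ℕ → S → (∀ j, A j) → ℝ,
        (∀ i, ∀ h < H, ∀ s a, rew i h s a ∈ Set.Icc (0 : ℝ) 1) →
      ∀ (s1 : S) (Pc : Fin m → Type) [∀ i, Fintype (Pc i)] [∀ i, Nonempty (Pc i)]
        (pol : ∀ i, Pc i → ℕ → S → A i → ℝ),
        (∀ i q, ∀ h < H, ∀ s, IsDist (pol i q h s)) →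
      ∀ (T : ℕ) (ε δ : ℝ), 0 ≤ ε → 0 < δ → δ < 1 →
      ∀ (Ω : Type) (m0 : MeasurableSpace Ω) (μ : Measure Ω), IsProbabilityMeasure μ →
      ∀ (F : Filtration ℕ m0) (πt : ℕ → ∀ i, Ω → Pc i),
        (∀ t i q, MeasurableSet[F t] {ω | πt t i ω = q}) →
      ∀ Vbar : ℕ → ∀ i, Pc i → Ω → ℝ,
        (∀ t i q, Measurable[F t] (Vbar t i q)) →
      ∀ Lam : ℕ → ∀ i, Pc i → Ω → ℝ,
        -- `Λ_i^1` is uniform on `Π_i`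
        (∀ i q ω, Lam 1 i q ω = 1 / (Fintype.card (Pc i) : ℝ)) →
        -- exponential-weights update with learning rate `η_i = √(log|Π_i|/(H²T))`
        (∀ t, 1 ≤ t → ∀ i q ω,
          Lam (t + 1) i q ω = Lam t i q ω *
              Real.exp (Real.sqrt (Real.log (Fintype.card (Pc i)) / ((H : ℝ) ^ 2 * T)) *
                Vbar t i q ω) /
            ∑ q', Lam t i q' ω *
              Real.exp (Real.sqrt (Real.log (Fintype.card (Pc i)) / ((H : ℝ) ^ 2 * T)) *
                Vbar t i q' ω)) →
        -- conditionally on `F_{t-1}`, each player samples `π_i^t ∼ Λ_i^t`,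
        -- independently across players
        (∀ t, 1 ≤ t → t ≤ T → ∀ q : ∀ i, Pc i,
          μ[Set.indicator {ω | ∀ i, πt t i ω = q i} (fun _ => (1 : ℝ)) | F (t - 1)]
            =ᵐ[μ] fun ω => ∏ i, Lam t i (q i) ω) →
        -- the estimates are optimistic and uniformly accurate, and lie in `[0, H]`
        (∀ t, 1 ≤ t → t ≤ T → ∀ i (q : Pc i), ∀ᵐ ω ∂μ,
          jointV H P (rew i)
              (prodPol fun j => pol j (Function.update (fun j' => πt t j' ω) i q j))
              0 s1
            ≤ Vbar t i q ω ∧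
          Vbar t i q ω ≤ jointV H P (rew i)
              (prodPol fun j => pol j (Function.update (fun j' => πt t j' ω) i q j))
              0 s1 + ε ∧
          0 ≤ Vbar t i q ω ∧ Vbar t i q ω ≤ H) →
        ENNReal.ofReal (1 - δ) ≤
          μ {ω | ∀ i (q : Pc i),
            ∑ t ∈ Finset.Icc 1 T,
              ((∑ qs : ∀ j, Pc j, (∏ j, Lam t j (qs j) ω) *
                  jointV H P (rew i)
                    (prodPol fun j => pol j (Function.update qs i q j)) 0 s1) -
               ∑ qs : ∀ j, Pc j, (∏ j, Lam t j (qs j) ω) *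
                  jointV H P (rew i) (prodPol fun j => pol j (qs j)) 0 s1)
              ≤ ε * T + C * H * Real.sqrt (T *
                  Real.log ((∑ j, (Fintype.card (Pc j) : ℝ)) / δ))} := by
  classical
  refine ⟨5, by norm_num, ?_⟩
  intro S iS m H A iA P hP rew hrew s1 Pc iPc nePc pol hpol T ε δ hε hδ0 hδ1 Ω m0 μ hprob
    F πt hπt Vbar hVbarMeas Lam hLam1 hLrec hsamp hopt
  haveI := hprob
  -- degenerate case m = 0
  by_cases hm0 : m = 0
  · subst hm0
    refine le_trans (le_trans (ENNReal.ofReal_le_one.mpr (by linarith)) measure_univ.symm.le)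
      (measure_mono fun ω _ => ?_)
    simp only [Set.mem_setOf_eq]
    intro i q
    exact i.elim0
  -- degenerate case T = 0
  by_cases hT0 : T = 0
  · subst hT0
    refine le_trans (le_trans (ENNReal.ofReal_le_one.mpr (by linarith)) measure_univ.symm.le)
      (measure_mono fun ω _ => ?_)
    simp only [Set.mem_setOf_eq]
    intro i q
    rw [Finset.Icc_eq_empty (by omega), Finset.sum_empty]
    have h1 : (0:ℝ) ≤ ε * (0:ℕ) := by norm_num
    have h2 : (0:ℝ) ≤ 5 * (H:ℝ) * Real.sqrt ((0:ℕ) * Real.log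
      ((∑ j, (Fintype.card (Pc j) : ℝ)) / δ)) := by positivity
    linarith
  -- degenerate case H = 0
  by_cases hH0 : H = 0
  · subst hH0
    refine le_trans (le_trans (ENNReal.ofReal_le_one.mpr (by linarith)) measure_univ.symm.le)
      (measure_mono fun ω _ => ?_)
    simp only [Set.mem_setOf_eq]
    intro i q
    have hj : ∀ pp : ℕ → S → (∀ j, A j) → ℝ, jointV 0 P (rew i) pp 0 s1 = 0 := by
      intro pp; rw [jointV]; simp
    simp only [hj, mul_zero, Finset.sum_const_zero, sub_zero, Finset.sum_const,
      Nat.cast_zero, sub_self, smul_zero]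
    have h1 : (0:ℝ) ≤ ε * (T:ℝ) := by positivity
    have h2 : (0:ℝ) ≤ 5 * (0:ℝ) * Real.sqrt ((T:ℕ) * Real.log
      ((∑ j, (Fintype.card (Pc j) : ℝ)) / δ)) := by positivity
    push_cast
    linarith
  -- main case
  have hT1 : 1 ≤ T := Nat.one_le_iff_ne_zero.mpr hT0
  have hH1 : 1 ≤ H := Nat.one_le_iff_ne_zero.mpr hH0
  have hTpos : (0:ℝ) < T := by exact_mod_cast Nat.pos_of_ne_zero hT0
  have hHpos : (0:ℝ) < H := by exact_mod_cast Nat.pos_of_ne_zero hH0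
  set Sc : ℝ := ∑ j, ((Fintype.card (Pc j) : ℝ)) with hSc
  set L : ℝ := Real.log (Sc / δ) with hLdef
  have hcard1 : ∀ j : Fin m, (1:ℝ) ≤ (Fintype.card (Pc j) : ℝ) := fun j => by
    exact_mod_cast Fintype.card_pos (α := Pc j)
  have hsum_le : ∀ i : Fin m, (Fintype.card (Pc i):ℝ) ≤ ∑ j, ((Fintype.card (Pc j)):ℝ) := by
    intro i
    have : ∀ j ∈ Finset.univ, (0:ℝ) ≤ ((Fintype.card (Pc j)):ℝ) := fun j _ => by positivity
    exact Finset.single_le_sum this (Finset.mem_univ i)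
  have hSc1 : (1:ℝ) ≤ Sc := by
    obtain ⟨i0⟩ : Nonempty (Fin m) := ⟨⟨0, Nat.pos_of_ne_zero hm0⟩⟩
    calc (1:ℝ) ≤ (Fintype.card (Pc i0) : ℝ) := hcard1 i0
    _ ≤ ∑ j, ((Fintype.card (Pc j)):ℝ) := hsum_le i0
    _ = Sc := hSc.symm
  have hScpos : (0:ℝ) < Sc := lt_of_lt_of_le one_pos hSc1
  have hL0 : 0 ≤ L := Real.log_nonneg (by rw [le_div_iff₀ hδ0]; linarith)
  have hLK : ∀ i : Fin m, Real.log (Fintype.card (Pc i)) ≤ L := by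
    intro i
    refine Real.log_le_log (by positivity) ?_
    calc (Fintype.card (Pc i) : ℝ) ≤ ∑ j, ((Fintype.card (Pc j)):ℝ) := hsum_le i
    _ = Sc := hSc.symm
    _ ≤ Sc / δ := by rw [le_div_iff₀ hδ0]; nlinarith
  -- abbreviations
  let Vf : (i : Fin m) → ((j : Fin m) → Pc j) → ℝ :=
    fun i qs => jointV H P (rew i) (prodPol fun j => pol j (qs j)) 0 s1
  let η : Fin m → ℝ :=
    fun i => Real.sqrt (Real.log (Fintype.card (Pc i)) / ((H:ℝ)^2 * T))
  let U : ℕ → (i : Fin m) → Pc i → Ω → ℝ := fun t i q ω =>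
    ∑ qs : (j : Fin m) → Pc j, (∏ j, Lam t j (qs j) ω) * Vf i (Function.update qs i q)
  let M : ℕ → Fin m → Ω → ℝ := fun t i ω =>
    ∑ qs : (j : Fin m) → Pc j, (∏ j, Lam t j (qs j) ω) * Vf i qs
  let W : ℕ → (i : Fin m) → Pc i → Ω → ℝ := fun t i q ω =>
    Vf i (Function.update (fun j => πt t j ω) i q)
  let G : ℕ → Fin m → Ω → ℝ := fun t i ω => ∑ q', Lam t i q' ω * W t i q' ω
  let Dm : (i : Fin m) → Pc i → ℕ → Ω → ℝ := fun i q t ω =>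
    (U t i q ω - W t i q ω) + (G t i ω - M t i ω)
  let thr : ℝ := 2 * H * Real.sqrt (2 * ((T:ℝ) * L))
  -- basic bounds
  have hVf : ∀ i qs, Vf i qs ∈ Set.Icc (0:ℝ) H := by
    intro i qs
    have hπ : ∀ h < H, ∀ s, IsDist (prodPol (fun j => pol j (qs j)) h s) := by
      intro h hh s
      exact isDist_pi (fun j => hpol j (qs j) h hh s)
    have h := jointV_mem hP (hrew i) hπ 0 s1
    simpa using h
  have hLamF : ∀ t, 1 ≤ t → ∀ ω (i : Fin m),
      (∀ q, 0 < Lam t i q ω) ∧ (∑ q, Lam t i q ω) = 1 := by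
    intro t ht ω i
    exact hedge_lam_pos_sum (η i) (fun t q => Vbar t i q ω) (fun t q => Lam t i q ω)
      (fun q => hLam1 i q ω) (fun t ht q => hLrec t ht i q ω) t ht
  have hLamle1 : ∀ t, 1 ≤ t → ∀ ω (i : Fin m) q, Lam t i q ω ≤ 1 := by
    intro t ht ω i q
    have h := hLamF t ht ω i
    calc Lam t i q ω ≤ ∑ q', Lam t i q' ω :=
      Finset.single_le_sum (fun q' _ => le_of_lt (h.1 q')) (Finset.mem_univ q)
    _ = 1 := h.2
  have hLamMeas : ∀ t, 1 ≤ t → ∀ (i : Fin m) q, Measurable[F (t-1)] (fun ω => Lam t i q ω) := by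
    intro t ht
    induction t, ht using Nat.le_induction with
    | base =>
      intro i q
      have h : (fun ω => Lam 1 i q ω) = fun _ => (1 / (Fintype.card (Pc i) : ℝ)) :=
        funext fun ω => hLam1 i q ω
      rw [h]
      exact measurable_const
    | succ t ht ih =>
      intro i q
      have hLam_t : ∀ (i' : Fin m) q', Measurable[F t] (fun ω => Lam t i' q' ω) :=
        fun i' q' => (ih i' q').mono (F.mono (by omega : t - 1 ≤ t)) le_rfl
      have hV : ∀ q', Measurable[F t] (fun ω => Vbar t i q' ω) := fun q' => hVbarMeas t i q'
      have heq : (fun ω => Lam (t+1) i q ω) = fun ω =>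
          Lam t i q ω * Real.exp (η i * Vbar t i q ω) /
            ∑ q', Lam t i q' ω * Real.exp (η i * Vbar t i q' ω) :=
        funext fun ω => hLrec t ht i q ω
      show Measurable[F t] (fun ω => Lam (t+1) i q ω)
      rw [heq]
      exact ((hLam_t i q).mul ((hV q).const_mul (η i)).exp).div
        (Finset.measurable_sum _ fun q' _ => ((hLam_t i q').mul (((hV q').const_mul (η i)).exp)))
  have hjointMeasSet : ∀ t (qs : (j : Fin m) → Pc j),
      MeasurableSet[F t] {ω | ∀ j, πt t j ω = qs j} := by
    intro t qs
    have h : {ω | ∀ j, πt t j ω = qs j} = ⋂ j, {ω | πt t j ω = qs j} := by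
      ext ω; simp [Set.mem_iInter]
    rw [h]
    exact MeasurableSet.iInter fun j => hπt t j (qs j)
  have hWmeas : ∀ t (i : Fin m) q, Measurable[F t] (W t i q) := by
    intro t i q
    exact measurable_sampled (F t) (fun j ω => πt t j ω) (fun qs => hjointMeasSet t qs)
      (fun qs => Vf i (Function.update qs i q))
  have hUmem : ∀ t, 1 ≤ t → ∀ (i : Fin m) q ω, U t i q ω ∈ Set.Icc (0:ℝ) H := by
    intro t ht i q ω
    exact sum_dist_mul_mem
      (isDist_pi (fun j => ⟨fun q' => le_of_lt ((hLamF t ht ω j).1 q'), (hLamF t ht ω j).2⟩))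
      (fun qs => hVf i (Function.update qs i q))
  have hMmem : ∀ t, 1 ≤ t → ∀ (i : Fin m) ω, M t i ω ∈ Set.Icc (0:ℝ) H := by
    intro t ht i ω
    exact sum_dist_mul_mem
      (isDist_pi (fun j => ⟨fun q' => le_of_lt ((hLamF t ht ω j).1 q'), (hLamF t ht ω j).2⟩))
      (fun qs => hVf i qs)
  have hWmem : ∀ t (i : Fin m) q ω, W t i q ω ∈ Set.Icc (0:ℝ) H := by
    intro t i q ω
    exact hVf i _
  have hGmem : ∀ t, 1 ≤ t → ∀ (i : Fin m) ω, G t i ω ∈ Set.Icc (0:ℝ) H := by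
    intro t ht i ω
    exact sum_dist_mul_mem
      ⟨fun q' => le_of_lt ((hLamF t ht ω i).1 q'), (hLamF t ht ω i).2⟩
      (fun q' => hWmem t i q' ω)
  -- measurability and integrability of the building blocks
  have hUMeas : ∀ t, 1 ≤ t → ∀ (i : Fin m) q, Measurable[F (t-1)] (U t i q) := by
    intro t ht i q
    exact Finset.measurable_sum _ fun qs _ =>
      (Finset.measurable_prod _ fun j _ => hLamMeas t ht j (qs j)).mul_const _
  have hMMeas : ∀ t, 1 ≤ t → ∀ (i : Fin m), Measurable[F (t-1)] (M t i) := by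
    intro t ht i
    exact Finset.measurable_sum _ fun qs _ =>
      (Finset.measurable_prod _ fun j _ => hLamMeas t ht j (qs j)).mul_const _
  have hGMeas : ∀ t, 1 ≤ t → ∀ (i : Fin m), Measurable[F t] (G t i) := by
    intro t ht i
    exact Finset.measurable_sum _ fun q' _ =>
      ((hLamMeas t ht i q').mono (F.mono (by omega : t - 1 ≤ t)) le_rfl).mul (hWmeas t i q')
  have habs_of_Icc : ∀ {x : ℝ}, x ∈ Set.Icc (0:ℝ) H → |x| ≤ (H:ℝ) := by
    intro x hx
    rw [abs_le]
    exact ⟨by linarith [hx.1], hx.2⟩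
  have hUint : ∀ t, 1 ≤ t → ∀ (i : Fin m) q, Integrable (U t i q) μ := by
    intro t ht i q
    exact integrable_of_abs_le
      (((hUMeas t ht i q).mono (F.le _) le_rfl)).aestronglyMeasurable
      (fun ω => habs_of_Icc (hUmem t ht i q ω))
  have hMint : ∀ t, 1 ≤ t → ∀ (i : Fin m), Integrable (M t i) μ := by
    intro t ht i
    exact integrable_of_abs_le
      (((hMMeas t ht i).mono (F.le _) le_rfl)).aestronglyMeasurable
      (fun ω => habs_of_Icc (hMmem t ht i ω))
  have hWint : ∀ t (i : Fin m) q, Integrable (W t i q) μ := by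
    intro t i q
    exact integrable_of_abs_le
      (((hWmeas t i q).mono (F.le _) le_rfl)).aestronglyMeasurable
      (fun ω => habs_of_Icc (hWmem t i q ω))
  have hGint : ∀ t, 1 ≤ t → ∀ (i : Fin m), Integrable (G t i) μ := by
    intro t ht i
    exact integrable_of_abs_le
      (((hGMeas t ht i).mono (F.le _) le_rfl)).aestronglyMeasurable
      (fun ω => habs_of_Icc (hGmem t ht i ω))
  -- conditional expectations
  have hcondW : ∀ t, 1 ≤ t → t ≤ T → ∀ (i : Fin m) q,
      μ[W t i q | F (t-1)] =ᵐ[μ] U t i q := by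
    intro t h1 h2 i q
    exact condexp_sampled (m0 := m0) (μ := μ) (F.le (t-1)) (fun j ω => πt t j ω)
      (fun qs => (F.le t) _ (hjointMeasSet t qs))
      (fun qs ω => ∏ j, Lam t j (qs j) ω)
      (fun qs => hsamp t h1 h2 qs)
      (fun qs => Vf i (Function.update qs i q))
  have hcondG : ∀ t, 1 ≤ t → t ≤ T → ∀ i : Fin m,
      μ[G t i | F (t-1)] =ᵐ[μ] M t i := by
    intro t h1 h2 i
    have hint : ∀ q' ∈ (Finset.univ : Finset (Pc i)),
        Integrable (fun ω => Lam t i q' ω * W t i q' ω) μ := by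
      intro q' _
      refine integrable_of_abs_le
        ((((hLamMeas t h1 i q').mono (F.le _) le_rfl).mul
          ((hWmeas t i q').mono (F.le _) le_rfl)).aestronglyMeasurable) (C := H)
        (fun ω => ?_)
      have hl0 := (hLamF t h1 ω i).1 q'
      have hl1 := hLamle1 t h1 ω i q'
      have hw := hWmem t i q' ω
      calc |Lam t i q' ω * W t i q' ω| = Lam t i q' ω * |W t i q' ω| := by
            rw [abs_mul, abs_of_pos hl0]
      _ ≤ 1 * (H:ℝ) := mul_le_mul hl1 (habs_of_Icc hw) (abs_nonneg _) one_pos.le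
      _ = (H:ℝ) := one_mul _
    have hGsum : G t i = ∑ q' ∈ Finset.univ, (fun ω => Lam t i q' ω * W t i q' ω) := by
      funext ω
      rw [Finset.sum_apply]
    have e1 : μ[G t i|F (t-1)] =ᵐ[μ]
        ∑ q' ∈ Finset.univ, μ[(fun ω => Lam t i q' ω * W t i q' ω)|F (t-1)] := by
      rw [hGsum]
      exact condExp_finsetSum hint _
    have h2' : ∀ q' : Pc i, μ[(fun ω => Lam t i q' ω * W t i q' ω)|F (t-1)] =ᵐ[μ]
        fun ω => Lam t i q' ω * U t i q' ω := by
      intro q'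
      have hpull : μ[(fun ω => Lam t i q' ω) * (W t i q')|F (t-1)] =ᵐ[μ]
          (fun ω => Lam t i q' ω) * μ[W t i q'|F (t-1)] :=
        condExp_stronglyMeasurable_mul_of_bound (F.le (t-1))
          ((hLamMeas t h1 i q').stronglyMeasurable) (hWint t i q') 1
          (ae_of_all _ fun ω => by
            rw [Real.norm_eq_abs, abs_of_pos ((hLamF t h1 ω i).1 q')]
            exact hLamle1 t h1 ω i q')
      refine hpull.trans ?_
      filter_upwards [hcondW t h1 h2 i q'] with ω hω
      simp only [Pi.mul_apply]
      rw [hω]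
    have e2 : (∑ q' ∈ Finset.univ, μ[(fun ω => Lam t i q' ω * W t i q' ω)|F (t-1)]) =ᵐ[μ]
        fun ω => ∑ q', Lam t i q' ω * U t i q' ω := by
      refine (eventuallyEq_sum (fun q' _ => h2' q')).trans ?_
      refine Filter.EventuallyEq.of_eq ?_
      funext ω
      rw [Finset.sum_apply]
    have hfinal : (fun ω => ∑ q', Lam t i q' ω * U t i q' ω) = M t i := by
      funext ω
      exact marginalize i (fun j q'' => Lam t j q'' ω) ((hLamF t h1 ω i).2) (Vf i)
    exact e1.trans (e2.trans (Filter.EventuallyEq.of_eq hfinal))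
  have hcondD : ∀ (i : Fin m) q t, 1 ≤ t → t ≤ T → μ[Dm i q t|F (t-1)] =ᵐ[μ] 0 := by
    intro i q t h1 h2
    have hcU : μ[U t i q|F (t-1)] = U t i q :=
      condExp_of_stronglyMeasurable (F.le _) ((hUMeas t h1 i q).stronglyMeasurable)
        (hUint t h1 i q)
    have hcM : μ[M t i|F (t-1)] = M t i :=
      condExp_of_stronglyMeasurable (F.le _) ((hMMeas t h1 i).stronglyMeasurable)
        (hMint t h1 i)
    have e1 : μ[Dm i q t|F (t-1)] =ᵐ[μ]
        μ[(fun ω => U t i q ω - W t i q ω)|F (t-1)] +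
        μ[(fun ω => G t i ω - M t i ω)|F (t-1)] :=
      condExp_add ((hUint t h1 i q).sub (hWint t i q)) ((hGint t h1 i).sub (hMint t h1 i)) _
    have e2 : μ[(fun ω => U t i q ω - W t i q ω)|F (t-1)] =ᵐ[μ]
        μ[U t i q|F (t-1)] - μ[W t i q|F (t-1)] :=
      condExp_sub (hUint t h1 i q) (hWint t i q) _
    have e3 : μ[(fun ω => G t i ω - M t i ω)|F (t-1)] =ᵐ[μ]
        μ[G t i|F (t-1)] - μ[M t i|F (t-1)] :=
      condExp_sub (hGint t h1 i) (hMint t h1 i) _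
    filter_upwards [e1, e2, e3, hcondW t h1 h2 i q, hcondG t h1 h2 i] with ω a1 a2 a3 a4 a5
    have b1 := congrFun hcU ω
    have b2 := congrFun hcM ω
    simp only [Pi.add_apply, Pi.sub_apply] at a1 a2 a3
    rw [a1, a2, a3, a4, a5, b1, b2]
    simp
  -- hedge bound, for a fixed ω where the estimates are in [0, H]
  have hhedge : ∀ ω (i : Fin m) (q : Pc i),
      (∀ t ∈ Finset.Icc 1 T, ∀ q' : Pc i, Vbar t i q' ω ∈ Set.Icc (0:ℝ) H) →
      ∑ t ∈ Finset.Icc 1 T, (Vbar t i q ω - ∑ q', Lam t i q' ω * Vbar t i q' ω) ≤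
        2 * H * Real.sqrt (T * L) := by
    intro ω i q hVb
    have hcardpos : 0 < Fintype.card (Pc i) := Fintype.card_pos
    have h2HL : 0 ≤ 2 * (H:ℝ) * Real.sqrt (T * L) := by positivity
    by_cases hcard : Fintype.card (Pc i) = 1
    · -- single policy: zero regret
      have hsub : Subsingleton (Pc i) := Fintype.card_le_one_iff_subsingleton.mp (le_of_eq hcard)
      have hzero : ∀ t ∈ Finset.Icc 1 T,
          Vbar t i q ω - ∑ q', Lam t i q' ω * Vbar t i q' ω = 0 := by
        intro t ht
        have ht1 : 1 ≤ t := (Finset.mem_Icc.1 ht).1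
        have hone : Lam t i q ω = 1 := by
          have h := (hLamF t ht1 ω i).2
          rwa [Fintype.sum_subsingleton (fun q' => Lam t i q' ω) q] at h
        have : (∑ q', Lam t i q' ω * Vbar t i q' ω) = Lam t i q ω * Vbar t i q ω :=
          Fintype.sum_subsingleton _ q
        rw [this, hone, one_mul, sub_self]
      rw [Finset.sum_congr rfl hzero, Finset.sum_const_zero]
      exact h2HL
    · have hcard2 : 2 ≤ Fintype.card (Pc i) := by omega
      have hlogpos : 0 < Real.log (Fintype.card (Pc i)) := by
        refine Real.log_pos ?_
        exact_mod_cast hcard2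
      set a : ℝ := Real.log (Fintype.card (Pc i)) with ha_def
      set b : ℝ := (H:ℝ)^2 * T with hb_def
      have hbpos : 0 < b := by rw [hb_def]; positivity
      have hηpos : 0 < η i := Real.sqrt_pos.mpr (div_pos hlogpos hbpos)
      have hη2 : (η i)^2 = a / b := Real.sq_sqrt (le_of_lt (div_pos hlogpos hbpos))
      have hsqrtab : Real.sqrt (a * b) = (H:ℝ) * Real.sqrt (T * a) := by
        rw [show a * b = (H:ℝ)^2 * ((T:ℝ) * a) by rw [hb_def]; ring,
          Real.sqrt_mul (by positivity), Real.sqrt_sq hHpos.le]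
      have hkey1 : η i * Real.sqrt (a * b) = a := by
        rw [show η i = Real.sqrt (a / b) from rfl, ← Real.sqrt_mul (by positivity)]
        rw [show a / b * (a * b) = a^2 by field_simp]
        exact Real.sqrt_sq hlogpos.le
      have hkey2 : η i * b = Real.sqrt (a * b) := by
        rw [show η i = Real.sqrt (a / b) from rfl]
        rw [show Real.sqrt (a/b) * b = Real.sqrt (a/b) * Real.sqrt (b^2) by
          rw [Real.sqrt_sq hbpos.le]]
        rw [← Real.sqrt_mul (by positivity)]
        congr 1
        field_simp
      have haL : a ≤ L := hLK i
      have hTaTL : Real.sqrt ((T:ℝ) * a) ≤ Real.sqrt ((T:ℝ) * L) :=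
        Real.sqrt_le_sqrt (mul_le_mul_of_nonneg_left haL hTpos.le)
      by_cases hcase : a ≤ T
      · -- hedge regime
        have hηH : η i * H ≤ 1 := by
          have hsq : (η i * H)^2 ≤ 1 := by
            rw [mul_pow, hη2, hb_def]
            have heq : a/((H:ℝ)^2*(T:ℝ)) * (H:ℝ)^2 = a / T := by
              field_simp
            rw [heq]
            exact (div_le_one hTpos).mpr hcase
          nlinarith [mul_nonneg hηpos.le hHpos.le, sq_nonneg (η i * H - 1)]
        have hco := hedge_core (η i) (H:ℝ) hηpos.le hηH hHpos.le
          (fun t q' => Vbar t i q' ω) (fun t q' => Lam t i q' ω) T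
          (fun q' => hLam1 i q' ω) (fun t ht q' => hLrec t ht i q' ω)
          (fun t ht q' => hVb t ht q') q
        beta_reduce at hco
        have hsum_split : ∑ t ∈ Finset.Icc 1 T,
            (η i * ∑ q', Lam t i q' ω * Vbar t i q' ω + (η i * H)^2) =
            η i * (∑ t ∈ Finset.Icc 1 T, ∑ q', Lam t i q' ω * Vbar t i q' ω) +
              T * (η i * H)^2 := by
          rw [Finset.sum_add_distrib, Finset.sum_const, Nat.card_Icc, ← Finset.mul_sum]
          simp [nsmul_eq_mul]
        rw [hsum_split] at hco
        have hTη : (T:ℝ) * (η i * H)^2 = a := by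
          rw [mul_pow, hη2, hb_def]
          field_simp
        rw [hTη] at hco
        have hfin : (∑ t ∈ Finset.Icc 1 T, Vbar t i q ω) -
            (∑ t ∈ Finset.Icc 1 T, ∑ q', Lam t i q' ω * Vbar t i q' ω) ≤ 2 * a / η i := by
          rw [le_div_iff₀ hηpos]
          linarith [hco]
        have haη : 2 * a / η i = 2 * ((H:ℝ) * Real.sqrt ((T:ℝ) * a)) := by
          rw [div_eq_iff hηpos.ne', ← hsqrtab, mul_assoc,
            mul_comm (Real.sqrt (a*b)) (η i), hkey1]
        calc ∑ t ∈ Finset.Icc 1 T, (Vbar t i q ω - ∑ q', Lam t i q' ω * Vbar t i q' ω)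
            = (∑ t ∈ Finset.Icc 1 T, Vbar t i q ω) -
              (∑ t ∈ Finset.Icc 1 T, ∑ q', Lam t i q' ω * Vbar t i q' ω) :=
              Finset.sum_sub_distrib _ _
          _ ≤ 2 * a / η i := hfin
          _ = 2 * ((H:ℝ) * Real.sqrt ((T:ℝ) * a)) := haη
          _ ≤ 2 * ((H:ℝ) * Real.sqrt ((T:ℝ) * L)) := by
              refine mul_le_mul_of_nonneg_left ?_ (by norm_num)
              exact mul_le_mul_of_nonneg_left hTaTL hHpos.le
          _ = 2 * H * Real.sqrt ((T:ℝ) * L) := by ring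
      · -- trivial regime : log K > T
        push_neg at hcase
        have hterm : ∀ t ∈ Finset.Icc 1 T,
            Vbar t i q ω - ∑ q', Lam t i q' ω * Vbar t i q' ω ≤ (H:ℝ) := by
          intro t ht
          have ht1 : 1 ≤ t := (Finset.mem_Icc.1 ht).1
          have h1 := (hVb t ht q).2
          have h2 : 0 ≤ ∑ q', Lam t i q' ω * Vbar t i q' ω :=
            Finset.sum_nonneg fun q' _ =>
              mul_nonneg (le_of_lt ((hLamF t ht1 ω i).1 q')) (hVb t ht q').1
          linarith
        have hsum : ∑ t ∈ Finset.Icc 1 T,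
            (Vbar t i q ω - ∑ q', Lam t i q' ω * Vbar t i q' ω) ≤ (T:ℝ) * H := by
          calc ∑ t ∈ Finset.Icc 1 T, (Vbar t i q ω - ∑ q', Lam t i q' ω * Vbar t i q' ω)
              ≤ ∑ _t ∈ Finset.Icc 1 T, (H:ℝ) := Finset.sum_le_sum hterm
            _ = (T:ℝ) * H := by
                rw [Finset.sum_const, Nat.card_Icc]
                simp [nsmul_eq_mul]
        have hT_le : (T:ℝ) ≤ Real.sqrt ((T:ℝ) * a) := by
          have h1 : (T:ℝ) = Real.sqrt ((T:ℝ) * T) := by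
            rw [Real.sqrt_mul_self hTpos.le]
          conv_lhs => rw [h1]
          exact Real.sqrt_le_sqrt (mul_le_mul_of_nonneg_left hcase.le hTpos.le)
        calc ∑ t ∈ Finset.Icc 1 T, (Vbar t i q ω - ∑ q', Lam t i q' ω * Vbar t i q' ω)
            ≤ (T:ℝ) * H := hsum
          _ ≤ Real.sqrt ((T:ℝ) * a) * H := mul_le_mul_of_nonneg_right hT_le hHpos.le
          _ ≤ Real.sqrt ((T:ℝ) * L) * H := mul_le_mul_of_nonneg_right hTaTL hHpos.le
          _ ≤ 2 * H * Real.sqrt ((T:ℝ) * L) := by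
              nlinarith [Real.sqrt_nonneg ((T:ℝ) * L), hHpos]
  -- bounds and measurability for the martingale differences
  have hDb : ∀ (i : Fin m) (q : Pc i) t, 1 ≤ t → t ≤ T → ∀ ω, |Dm i q t ω| ≤ 2*(H:ℝ) := by
    intro i q t h1 _ ω
    have hU := hUmem t h1 i q ω
    have hW := hWmem t i q ω
    have hG := hGmem t h1 i ω
    have hM := hMmem t h1 i ω
    rw [abs_le]
    constructor
    · show -(2*(H:ℝ)) ≤ (U t i q ω - W t i q ω) + (G t i ω - M t i ω)
      linarith [hU.1, hU.2, hW.1, hW.2, hG.1, hG.2, hM.1, hM.2]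
    · show (U t i q ω - W t i q ω) + (G t i ω - M t i ω) ≤ 2*(H:ℝ)
      linarith [hU.1, hU.2, hW.1, hW.2, hG.1, hG.2, hM.1, hM.2]
  have hDmeasT : ∀ (i : Fin m) (q : Pc i) t, 1 ≤ t → t ≤ T → Measurable[F t] (Dm i q t) := by
    intro i q t h1 _
    have hU' : Measurable[F t] (U t i q) :=
      (hUMeas t h1 i q).mono (F.mono (by omega : t - 1 ≤ t)) le_rfl
    have hM' : Measurable[F t] (M t i) :=
      (hMMeas t h1 i).mono (F.mono (by omega : t - 1 ≤ t)) le_rfl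
    have ha : Measurable[F t] (fun ω => U t i q ω - W t i q ω) := hU'.sub (hWmeas t i q)
    have hb : Measurable[F t] (fun ω => G t i ω - M t i ω) := (hGMeas t h1 i).sub hM'
    have hab : Measurable[F t] (fun ω => (U t i q ω - W t i q ω) + (G t i ω - M t i ω)) :=
      ha.add hb
    exact hab
  have hthr0 : (0:ℝ) ≤ thr := by
    show (0:ℝ) ≤ 2*(H:ℝ)*Real.sqrt (2*((T:ℝ)*L))
    positivity
  -- Azuma bound for each bad event
  have hBadBound : ∀ (i : Fin m) (q : Pc i),
      μ {ω | thr ≤ ∑ t ∈ Finset.Icc 1 T, Dm i q t ω} ≤ ENNReal.ofReal (δ / Sc) := by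
    intro i q
    have haz := azuma_tail (m0 := m0) (μ := μ) F T hT1 (Dm i q) (2*(H:ℝ)) (by positivity)
      (fun t ht1 ht2 => hDmeasT i q t ht1 ht2) (fun t ht1 ht2 ω => hDb i q t ht1 ht2 ω)
      (fun t ht1 ht2 => hcondD i q t ht1 ht2) thr hthr0
    refine le_trans haz ?_
    refine ENNReal.ofReal_le_ofReal ?_
    have hexp : -(thr^2)/(2*(2*(H:ℝ))^2*T) = -L := by
      show -((2*(H:ℝ)*Real.sqrt (2*((T:ℝ)*L)))^2)/(2*(2*(H:ℝ))^2*(T:ℝ)) = -L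
      rw [mul_pow, mul_pow, Real.sq_sqrt (by positivity)]
      field_simp
    rw [hexp, Real.exp_neg, hLdef, Real.exp_log (div_pos hScpos hδ0), inv_div]
  -- the almost-sure sandwich event
  have hE1 : ∀ᵐ ω ∂μ, ∀ t ∈ Finset.Icc 1 T, ∀ (i : Fin m) (q : Pc i),
      W t i q ω ≤ Vbar t i q ω ∧ Vbar t i q ω ≤ W t i q ω + ε ∧
        0 ≤ Vbar t i q ω ∧ Vbar t i q ω ≤ H := by
    rw [MeasureTheory.ae_all_iff]
    intro t
    by_cases ht : t ∈ Finset.Icc 1 T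
    · have h1 := Finset.mem_Icc.1 ht
      have hin : ∀ᵐ ω ∂μ, ∀ (i : Fin m) (q : Pc i),
          W t i q ω ≤ Vbar t i q ω ∧ Vbar t i q ω ≤ W t i q ω + ε ∧
            0 ≤ Vbar t i q ω ∧ Vbar t i q ω ≤ H := by
        rw [MeasureTheory.ae_all_iff]
        intro i
        rw [MeasureTheory.ae_all_iff]
        intro q
        exact hopt t h1.1 h1.2 i q
      filter_upwards [hin] with ω h _
      exact h
    · exact MeasureTheory.ae_of_all _ fun ω hmem => absurd hmem ht
  -- the deterministic regret derivation on the good event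
  have hmain : ∀ ω,
      (∀ t ∈ Finset.Icc 1 T, ∀ (i : Fin m) (q : Pc i),
        W t i q ω ≤ Vbar t i q ω ∧ Vbar t i q ω ≤ W t i q ω + ε ∧
          0 ≤ Vbar t i q ω ∧ Vbar t i q ω ≤ H) →
      (∀ (i : Fin m) (q : Pc i), ¬ (thr ≤ ∑ t ∈ Finset.Icc 1 T, Dm i q t ω)) →
      ∀ (i : Fin m) (q : Pc i), ∑ t ∈ Finset.Icc 1 T, (U t i q ω - M t i ω) ≤
        ε * (T:ℝ) + 5 * (H:ℝ) * Real.sqrt ((T:ℝ) * L) := by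
    intro ω hsw hBd i q
    have ident : ∀ t, U t i q ω - M t i ω = Dm i q t ω + (W t i q ω - G t i ω) := by
      intro t
      show U t i q ω - M t i ω =
        ((U t i q ω - W t i q ω) + (G t i ω - M t i ω)) + (W t i q ω - G t i ω)
      ring
    have hWGbound : ∀ t ∈ Finset.Icc 1 T,
        W t i q ω - G t i ω ≤ (Vbar t i q ω - ∑ q', Lam t i q' ω * Vbar t i q' ω) + ε := by
      intro t ht
      have ht1 : 1 ≤ t := (Finset.mem_Icc.1 ht).1
      have hWq := (hsw t ht i q).1
      have hGlow : (∑ q', Lam t i q' ω * Vbar t i q' ω) - ε ≤ G t i ω := by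
        have hstep : ∀ q' ∈ (Finset.univ : Finset (Pc i)),
            Lam t i q' ω * (Vbar t i q' ω - ε) ≤ Lam t i q' ω * W t i q' ω := by
          intro q' _
          refine mul_le_mul_of_nonneg_left ?_ (le_of_lt ((hLamF t ht1 ω i).1 q'))
          linarith [(hsw t ht i q').2.1]
        have hsum := Finset.sum_le_sum hstep
        have he : ∑ q', Lam t i q' ω * (Vbar t i q' ω - ε) =
            (∑ q', Lam t i q' ω * Vbar t i q' ω) - ε := by
          simp_rw [mul_sub]
          rw [Finset.sum_sub_distrib, ← Finset.sum_mul, (hLamF t ht1 ω i).2, one_mul]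
        rw [he] at hsum
        exact hsum
      linarith
    have hVb : ∀ t ∈ Finset.Icc 1 T, ∀ q' : Pc i, Vbar t i q' ω ∈ Set.Icc (0:ℝ) H := by
      intro t ht q'
      exact ⟨(hsw t ht i q').2.2.1, (hsw t ht i q').2.2.2⟩
    have hhedge' := hhedge ω i q hVb
    have hsplit : ∑ t ∈ Finset.Icc 1 T, (U t i q ω - M t i ω) =
        (∑ t ∈ Finset.Icc 1 T, Dm i q t ω) +
        ∑ t ∈ Finset.Icc 1 T, (W t i q ω - G t i ω) := by
      rw [← Finset.sum_add_distrib]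
      exact Finset.sum_congr rfl fun t _ => ident t
    have hWGsum : ∑ t ∈ Finset.Icc 1 T, (W t i q ω - G t i ω) ≤
        2 * (H:ℝ) * Real.sqrt ((T:ℝ) * L) + ε * (T:ℝ) := by
      calc ∑ t ∈ Finset.Icc 1 T, (W t i q ω - G t i ω)
          ≤ ∑ t ∈ Finset.Icc 1 T,
            ((Vbar t i q ω - ∑ q', Lam t i q' ω * Vbar t i q' ω) + ε) :=
            Finset.sum_le_sum hWGbound
        _ = (∑ t ∈ Finset.Icc 1 T, (Vbar t i q ω - ∑ q', Lam t i q' ω * Vbar t i q' ω))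
            + (T:ℝ) * ε := by
            rw [Finset.sum_add_distrib, Finset.sum_const, Nat.card_Icc]
            simp [nsmul_eq_mul]
        _ ≤ 2 * (H:ℝ) * Real.sqrt ((T:ℝ) * L) + ε * (T:ℝ) := by
            have := hhedge'
            linarith
    have hthr3 : thr ≤ 3 * (H:ℝ) * Real.sqrt ((T:ℝ) * L) := by
      have hsqrt2 : Real.sqrt 2 ≤ 3/2 := by
        nlinarith [Real.sq_sqrt (by norm_num : (0:ℝ) ≤ 2), Real.sqrt_nonneg 2]
      show 2*(H:ℝ)*Real.sqrt (2*((T:ℝ)*L)) ≤ 3 * (H:ℝ) * Real.sqrt ((T:ℝ) * L)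
      rw [Real.sqrt_mul (by norm_num : (0:ℝ) ≤ 2)]
      nlinarith [Real.sqrt_nonneg ((T:ℝ)*L), hHpos, hsqrt2,
        mul_le_mul_of_nonneg_right hsqrt2 (Real.sqrt_nonneg ((T:ℝ)*L))]
    have hDle : ∑ t ∈ Finset.Icc 1 T, Dm i q t ω ≤ thr := le_of_not_ge fun hc => hBd i q hc
    rw [hsplit]
    calc (∑ t ∈ Finset.Icc 1 T, Dm i q t ω) + ∑ t ∈ Finset.Icc 1 T, (W t i q ω - G t i ω)
        ≤ 3 * (H:ℝ) * Real.sqrt ((T:ℝ) * L) +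
          (2 * (H:ℝ) * Real.sqrt ((T:ℝ) * L) + ε * (T:ℝ)) := by
          have := le_trans hDle hthr3
          linarith [hWGsum]
      _ = ε * (T:ℝ) + 5 * (H:ℝ) * Real.sqrt ((T:ℝ) * L) := by ring
  -- put everything together
  show ENNReal.ofReal (1 - δ) ≤ μ {ω | ∀ (i : Fin m) (q : Pc i),
    ∑ t ∈ Finset.Icc 1 T, (U t i q ω - M t i ω) ≤
      ε * (T:ℝ) + 5 * (H:ℝ) * Real.sqrt ((T:ℝ) * L)}
  set GS : Set Ω := {ω | ∀ (i : Fin m) (q : Pc i),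
    ∑ t ∈ Finset.Icc 1 T, (U t i q ω - M t i ω) ≤
      ε * (T:ℝ) + 5 * (H:ℝ) * Real.sqrt ((T:ℝ) * L)} with hGS
  have hsubset : GSᶜ ⊆ {ω | ¬ (∀ t ∈ Finset.Icc 1 T, ∀ (i : Fin m) (q : Pc i),
      W t i q ω ≤ Vbar t i q ω ∧ Vbar t i q ω ≤ W t i q ω + ε ∧
        0 ≤ Vbar t i q ω ∧ Vbar t i q ω ≤ H)} ∪
      ⋃ (i : Fin m), ⋃ (q : Pc i), {ω | thr ≤ ∑ t ∈ Finset.Icc 1 T, Dm i q t ω} := by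
    intro ω hω
    by_contra hcon
    simp only [Set.mem_union, Set.mem_iUnion, Set.mem_setOf_eq, not_or, not_exists] at hcon
    obtain ⟨h1, h2⟩ := hcon
    rw [not_not] at h1
    exact hω (hmain ω h1 fun i q => h2 i q)
  have hcompl : μ GSᶜ ≤ ENNReal.ofReal δ := by
    refine le_trans (measure_mono hsubset) ?_
    refine le_trans (measure_union_le _ _) ?_
    have h0 : μ {ω | ¬ (∀ t ∈ Finset.Icc 1 T, ∀ (i : Fin m) (q : Pc i),
        W t i q ω ≤ Vbar t i q ω ∧ Vbar t i q ω ≤ W t i q ω + ε ∧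
          0 ≤ Vbar t i q ω ∧ Vbar t i q ω ≤ H)} = 0 := by
      exact MeasureTheory.ae_iff.mp hE1
    rw [h0, zero_add]
    refine le_trans (measure_iUnion_le _) ?_
    refine le_trans (ENNReal.tsum_le_tsum (fun i => measure_iUnion_le _)) ?_
    have hstep : ∀ i : Fin m,
        (∑' (q : Pc i), μ {ω | thr ≤ ∑ t ∈ Finset.Icc 1 T, Dm i q t ω}) ≤
          ENNReal.ofReal ((Fintype.card (Pc i) : ℝ) * (δ / Sc)) := by
      intro i
      rw [tsum_fintype]
      calc (∑ q : Pc i, μ {ω | thr ≤ ∑ t ∈ Finset.Icc 1 T, Dm i q t ω})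
          ≤ ∑ _q : Pc i, ENNReal.ofReal (δ / Sc) :=
            Finset.sum_le_sum fun q _ => hBadBound i q
        _ = (Fintype.card (Pc i)) • ENNReal.ofReal (δ / Sc) := by
            rw [Finset.sum_const, Finset.card_univ]
        _ = ENNReal.ofReal ((Fintype.card (Pc i) : ℝ) * (δ / Sc)) := by
            rw [nsmul_eq_mul, ← ENNReal.ofReal_natCast (Fintype.card (Pc i)),
              ← ENNReal.ofReal_mul (by positivity)]
    calc (∑' (i : Fin m), ∑' (q : Pc i), μ {ω | thr ≤ ∑ t ∈ Finset.Icc 1 T, Dm i q t ω})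
        ≤ ∑' (i : Fin m), ENNReal.ofReal ((Fintype.card (Pc i) : ℝ) * (δ / Sc)) :=
          ENNReal.tsum_le_tsum hstep
      _ = ∑ i : Fin m, ENNReal.ofReal ((Fintype.card (Pc i) : ℝ) * (δ / Sc)) := tsum_fintype _
      _ = ENNReal.ofReal (∑ i : Fin m, (Fintype.card (Pc i) : ℝ) * (δ / Sc)) :=
          (ENNReal.ofReal_sum_of_nonneg (fun i _ => by positivity)).symm
      _ = ENNReal.ofReal (Sc * (δ / Sc)) := by rw [← Finset.sum_mul, ← hSc]
      _ = ENNReal.ofReal δ := by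
          rw [mul_comm, div_mul_cancel₀ _ hScpos.ne']
  have huniv : (1:ENNReal) ≤ μ GS + ENNReal.ofReal δ := by
    calc (1:ENNReal) = μ Set.univ := measure_univ.symm
    _ = μ (GS ∪ GSᶜ) := by rw [Set.union_compl_self]
    _ ≤ μ GS + μ GSᶜ := measure_union_le _ _
    _ ≤ μ GS + ENNReal.ofReal δ := add_le_add le_rfl hcompl
  calc ENNReal.ofReal (1-δ) = ENNReal.ofReal 1 - ENNReal.ofReal δ :=
      ENNReal.ofReal_sub 1 hδ0.le
    _ = 1 - ENNReal.ofReal δ := by rw [ENNReal.ofReal_one]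
    _ ≤ μ GS := by
        rw [tsub_le_iff_right]
        exact huniv
end
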